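/- arXiv:2005.00538 — 8 statements merged into one kernel-verified Lean document; each statement's English description precedes it below -/
import Mathlib

section
/- In an alternative ring R with unity and idempotent e_1, setting e_2 = 1 − e_1, for all a ∈ R and all i, j ∈ {1,2} one has (e_i a)e_j = e_i (a e_j). -/
/-- Flexible law in an alternative ring, by linearization. -/
theorem flex_aux {R : Type*} [NonAssocRing R]
    (alt1 : ∀ x y : R, x * x * y = x * (x * y))
    (alt2 : ∀ x y : R, y * x * x = y * (x * x)) :
    ∀ x y : R, x * y * x = x * (y * x) := by
  intro x y
  have h := alt1 (x + y) x
  simp only [add_mul, mul_add] at h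
  rw [alt1 x x, alt2 x y, alt1 y x] at h
  have key : x * y * x + (x * (x * x) + (y * (x * x) + y * (y * x)))
      = x * (y * x) + (x * (x * x) + (y * (x * x) + y * (y * x))) := by
    abel_nf at h ⊢
    convert h using 2
  exact add_right_cancel key

/-- in a unital alternative ring with idempotent `e₁` and
`e₂ = 1 - e₁`, one has `(eᵢ a) eⱼ = eᵢ (a eⱼ)` for all `a` and `i, j ∈ {1,2}`. -/
theorem stmt3 {R : Type*} [NonAssocRing R]
    (alt1 : ∀ x y : R, x * x * y = x * (x * y))
    (alt2 : ∀ x y : R, y * x * x = y * (x * x))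
    (e₁ : R) (he : e₁ * e₁ = e₁) :
    ∀ a : R, ∀ ei ∈ ({e₁, 1 - e₁} : Set R), ∀ ej ∈ ({e₁, 1 - e₁} : Set R),
      ei * a * ej = ei * (a * ej) := by
  have flex := flex_aux alt1 alt2
  have h12 : ∀ e a : R, e * a * (1 - e) = e * (a * (1 - e)) := by
    intro e a
    rw [mul_sub, mul_one, mul_sub, mul_one, mul_sub, flex]
  have h21 : ∀ e a : R, (1 - e) * a * e = (1 - e) * (a * e) := by
    intro e a
    rw [sub_mul, sub_mul, sub_mul, one_mul, one_mul, flex]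
  intro a ei hi ej hj
  simp only [Set.mem_insert_iff, Set.mem_singleton_iff] at hi hj
  rcases hi with rfl | rfl <;> rcases hj with rfl | rfl <;>
    first
    | exact flex _ a
    | exact h12 _ a
    | exact h21 _ a
end

section
/- Let R be a unital 2- and 3-torsion free alternative ring with a nontrivial idempotent e_1, e_2 = 1 − e_1, satisfying: for each i ∈ {1,2}, if x ∈ R has (x r)e_i = 0 for all r ∈ R, then x = 0. Then Z(R) = { z_11 + z_22 : z_11 ∈ R_11, z_22 ∈ R_22, and [z_11 + z_22, x] = 0 for all x ∈ R_12 and for all x ∈ R_21 }. -/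
/-- The pair of Peirce idempotents associated to an idempotent `e`:
`peirceE e 0 = e₁ = e` and `peirceE e 1 = e₂ = 1 - e`. -/
def peirceE {R : Type*} [NonAssocRing R] (e : R) (i : Fin 2) : R :=
  if i = 0 then e else 1 - e

/-- The Peirce component `R_ij = eᵢ R eⱼ` of a unital alternative ring relative
to the idempotent `e` (indices `0, 1` standing for `1, 2`). -/
def peirceSet {R : Type*} [NonAssocRing R] (e : R) (i j : Fin 2) : Set R :=
  {x : R | ∃ a : R, x = peirceE e i * (a * peirceE e j)}


set_option linter.unusedSectionVars false
set_option linter.unusedVariables false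

namespace Stmt5Aux

variable {R : Type*} [NonAssocRing R]

theorem pE0 (e : R) : peirceE e 0 = e := rfl
theorem pE1 (e : R) : peirceE e 1 = 1 - e := rfl

theorem sw1' (alt1 : ∀ x y : R, x * x * y = x * (x * y)) (x y z : R) :
    x * y * z - x * (y * z) = -(y * x * z - y * (x * z)) := by
  have h := alt1 (x + y) z
  simp only [add_mul, mul_add] at h
  rw [alt1 x z, alt1 y z] at h
  linear_combination (norm := abel) h

theorem sw2' (alt2 : ∀ x y : R, y * x * x = y * (x * x)) (x y z : R) :
    x * y * z - x * (y * z) = -(x * z * y - x * (z * y)) := by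
  have h := alt2 (y + z) x
  simp only [add_mul, mul_add] at h
  rw [alt2 y x, alt2 z x] at h
  linear_combination (norm := abel) h

theorem twoz (tor2 : ∀ x : R, (2 : ℕ) • x = 0 → x = 0) (u : R) (h : u + u = 0) :
    u = 0 := tor2 u (by rw [two_nsmul]; exact h)

section withE
variable (alt1 : ∀ x y : R, x * x * y = x * (x * y))
variable (alt2 : ∀ x y : R, y * x * x = y * (x * x))
variable (tor2 : ∀ x : R, (2 : ℕ) • x = 0 → x = 0)
variable {e : R} (he : e * e = e)
include alt1 alt2 tor2 he

/-- R₁₂ R₁₁ = 0 -/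
theorem Z1 {x a : R} (hex : e * x = x) (hxe : x * e = 0)
    (hea : e * a = a) (hae : a * e = a) : x * a = 0 := by
  have h1 := sw2' alt2 x e a
  rw [hxe, hea, hae, zero_mul] at h1
  have hue : x * a * e = x * a + x * a := by linear_combination (norm := abel) h1
  have h2 := alt2 e (x * a)
  rw [he, hue, add_mul, hue] at h2
  have h3 : x * a + x * a = 0 := by linear_combination (norm := abel) h2
  exact twoz tor2 _ h3

/-- R₁₁ R₂₁ = 0 -/
theorem Z2 {a y : R} (hea : e * a = a) (hae : a * e = a)
    (hey : e * y = 0) (hye : y * e = y) : a * y = 0 := by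
  have h1 := sw1' alt1 e a y
  rw [hea, hae, hey, mul_zero] at h1
  have hue : e * (a * y) = a * y + a * y := by linear_combination (norm := abel) -h1
  have h2 := alt1 e (a * y)
  rw [he, hue, mul_add, hue] at h2
  have h3 : a * y + a * y = 0 := by linear_combination (norm := abel) -h2
  exact twoz tor2 _ h3

/-- R₁₁ R₂₂ = 0 -/
theorem Z3 {a b : R} (hea : e * a = a) (hae : a * e = a)
    (heb : e * b = 0) (hbe : b * e = 0) : a * b = 0 := by
  have h1 := sw2' alt2 a e b
  rw [hae, heb, hbe, mul_zero] at h1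
  have hue : a * b * e = -(a * b) := by linear_combination (norm := abel) h1
  have h2 := alt2 e (a * b)
  rw [he, hue, neg_mul, hue] at h2
  have h3 : a * b + a * b = 0 := by linear_combination (norm := abel) h2
  exact twoz tor2 _ h3

/-- R₂₂ R₁₁ = 0 -/
theorem Z4 {b a : R} (heb : e * b = 0) (hbe : b * e = 0)
    (hea : e * a = a) (hae : a * e = a) : b * a = 0 := by
  have h1 := sw1' alt1 e b a
  rw [heb, hbe, hea, zero_mul] at h1
  have hue : e * (b * a) = -(b * a) := by linear_combination (norm := abel) -h1
  have h2 := alt1 e (b * a)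
  rw [he, hue, mul_neg, hue] at h2
  have h3 : b * a + b * a = 0 := by linear_combination (norm := abel) -h2
  exact twoz tor2 _ h3

/-- R₂₂ R₁₂ = 0 -/
theorem Z5 {b x : R} (heb : e * b = 0) (hbe : b * e = 0)
    (hex : e * x = x) (hxe : x * e = 0) : b * x = 0 := by
  have h1 := sw1' alt1 e b x
  rw [heb, hbe, hex, zero_mul] at h1
  have hue : e * (b * x) = -(b * x) := by linear_combination (norm := abel) -h1
  have h2 := alt1 e (b * x)
  rw [he, hue, mul_neg, hue] at h2
  have h3 : b * x + b * x = 0 := by linear_combination (norm := abel) -h2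
  exact twoz tor2 _ h3

/-- R₂₁ R₂₂ = 0 -/
theorem Z6 {y b : R} (hey : e * y = 0) (hye : y * e = y)
    (heb : e * b = 0) (hbe : b * e = 0) : y * b = 0 := by
  have h1 := sw2' alt2 y e b
  rw [hye, heb, hbe, mul_zero] at h1
  have hue : y * b * e = -(y * b) := by linear_combination (norm := abel) h1
  have h2 := alt2 e (y * b)
  rw [he, hue, neg_mul, hue] at h2
  have h3 : y * b + y * b = 0 := by linear_combination (norm := abel) h2
  exact twoz tor2 _ h3

/-- R₁₁ closed: left -/
theorem C11a {a a' : R} (hea : e * a = a) (hae : a * e = a)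
    (hea' : e * a' = a') : e * (a * a') = a * a' := by
  have h := sw1' alt1 e a a'
  rw [hea, hae, hea'] at h
  linear_combination (norm := abel) -h

/-- R₁₁ closed: right -/
theorem C11b {a a' : R} (hea' : e * a' = a') (ha'e : a' * e = a')
    (hae : a * e = a) : a * a' * e = a * a' := by
  have h := sw2' alt2 a a' e
  rw [ha'e, hae, hea'] at h
  linear_combination (norm := abel) h

/-- R₁₁ R₁₂ ⊆ R₁₂ : left -/
theorem C1112a {a x : R} (hea : e * a = a) (hae : a * e = a)
    (hex : e * x = x) : e * (a * x) = a * x := by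
  have h := sw1' alt1 e a x
  rw [hea, hae, hex] at h
  linear_combination (norm := abel) -h

/-- R₁₁ R₁₂ ⊆ R₁₂ : right -/
theorem C1112b {a x : R} (hae : a * e = a) (hex : e * x = x)
    (hxe : x * e = 0) : a * x * e = 0 := by
  have h := sw2' alt2 a x e
  rw [hxe, hae, hex, mul_zero] at h
  linear_combination (norm := abel) h

/-- R₂₂ closed: left -/
theorem C22a {b b' : R} (heb : e * b = 0) (hbe : b * e = 0)
    (heb' : e * b' = 0) : e * (b * b') = 0 := by
  have h := sw1' alt1 e b b'
  rw [heb, hbe, heb', zero_mul, mul_zero] at h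
  linear_combination (norm := abel) -h

/-- R₂₂ closed: right -/
theorem C22b {b b' : R} (hbe : b * e = 0) (heb' : e * b' = 0)
    (hb'e : b' * e = 0) : b * b' * e = 0 := by
  have h := sw2' alt2 b b' e
  rw [hb'e, hbe, heb', zero_mul, mul_zero] at h
  linear_combination (norm := abel) h

/-- R₂₂ R₂₁ ⊆ R₂₁ : left -/
theorem C2221a {b y : R} (heb : e * b = 0) (hbe : b * e = 0)
    (hey : e * y = 0) : e * (b * y) = 0 := by
  have h := sw1' alt1 e b y
  rw [heb, hbe, hey, zero_mul, mul_zero] at h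
  linear_combination (norm := abel) -h

/-- R₂₂ R₂₁ ⊆ R₂₁ : right -/
theorem C2221b {b y : R} (hbe : b * e = 0) (hey : e * y = 0)
    (hye : y * e = y) : b * y * e = b * y := by
  have h := sw2' alt2 b y e
  rw [hye, hbe, hey, zero_mul, mul_zero] at h
  linear_combination (norm := abel) h

/-- (R₁₁ R₁₁) R₁₂ associativity -/
theorem AS1 {p q x : R} (hep : e * p = p) (hpe : p * e = p)
    (heq : e * q = q) (hqe : q * e = q) (hex : e * x = x) (hxe : x * e = 0) :
    p * q * x = p * (q * x) := by
  have h := sw2' alt2 p q x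
  have h1 : x * q = 0 := Z1 alt1 alt2 tor2 he hex hxe heq hqe
  have h2 : p * x * q = 0 :=
    Z1 alt1 alt2 tor2 he (C1112a alt1 alt2 tor2 he hep hpe hex) (C1112b alt1 alt2 tor2 he hpe hex hxe) heq hqe
  rw [h1, h2, mul_zero] at h
  linear_combination (norm := abel) h

/-- (R₂₂ R₂₂) R₂₁ associativity -/
theorem AS2 {p q y : R} (hep : e * p = 0) (hpe : p * e = 0)
    (heq : e * q = 0) (hqe : q * e = 0) (hey : e * y = 0) (hye : y * e = y) :
    p * q * y = p * (q * y) := by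
  have h := sw2' alt2 p q y
  have h1 : y * q = 0 := Z6 alt1 alt2 tor2 he hey hye heq hqe
  have h2 : p * y * q = 0 :=
    Z6 alt1 alt2 tor2 he (C2221a alt1 alt2 tor2 he hep hpe hey) (C2221b alt1 alt2 tor2 he hpe hey hye) heq hqe
  rw [h1, h2, mul_zero] at h
  linear_combination (norm := abel) h

/-- Key lemma 1: [z₁₁, a] R₁₂ = 0 -/
theorem Key1 {z1 z2 a x : R}
    (hz1L : e * z1 = z1) (hz1R : z1 * e = z1)
    (hz2L : e * z2 = 0) (hz2R : z2 * e = 0)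
    (hz : ∀ u : R, e * u = u → u * e = 0 → z1 * u = u * z2)
    (heaa : e * a = a) (haae : a * e = a)
    (hex : e * x = x) (hxe : x * e = 0) :
    (z1 * a - a * z1) * x = 0 := by
  have e1 : z1 * a * x = a * x * z2 := by
    rw [AS1 alt1 alt2 tor2 he hz1L hz1R heaa haae hex hxe]
    exact hz (a * x) (C1112a alt1 alt2 tor2 he heaa haae hex) (C1112b alt1 alt2 tor2 he haae hex hxe)
  have e2 : a * z1 * x = a * (x * z2) := by
    rw [AS1 alt1 alt2 tor2 he heaa haae hz1L hz1R hex hxe, hz x hex hxe]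
  have h := sw1' alt1 a x z2
  have hxa : x * a = 0 := Z1 alt1 alt2 tor2 he hex hxe heaa haae
  have haz2 : a * z2 = 0 := Z3 alt1 alt2 tor2 he heaa haae hz2L hz2R
  rw [hxa, haz2, zero_mul, mul_zero] at h
  rw [sub_mul, e1, e2]
  linear_combination (norm := abel) h

/-- Key lemma 2: [z₂₂, b] R₂₁ = 0 -/
theorem Key2 {z1 z2 b y : R}
    (hz1L : e * z1 = z1) (hz1R : z1 * e = z1)
    (hz2L : e * z2 = 0) (hz2R : z2 * e = 0)
    (hz : ∀ u : R, e * u = 0 → u * e = u → z2 * u = u * z1)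
    (hebb : e * b = 0) (hbbe : b * e = 0)
    (hey : e * y = 0) (hye : y * e = y) :
    (z2 * b - b * z2) * y = 0 := by
  have e1 : z2 * b * y = b * y * z1 := by
    rw [AS2 alt1 alt2 tor2 he hz2L hz2R hebb hbbe hey hye]
    exact hz (b * y) (C2221a alt1 alt2 tor2 he hebb hbbe hey) (C2221b alt1 alt2 tor2 he hbbe hey hye)
  have e2 : b * z2 * y = b * (y * z1) := by
    rw [AS2 alt1 alt2 tor2 he hebb hbbe hz2L hz2R hey hye, hz y hey hye]
  have h := sw1' alt1 b y z1
  have hyb : y * b = 0 := Z6 alt1 alt2 tor2 he hey hye hebb hbbe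
  have hbz1 : b * z1 = 0 := Z4 alt1 alt2 tor2 he hebb hbbe hz1L hz1R
  rw [hyb, hbz1, zero_mul, mul_zero] at h
  rw [sub_mul, e1, e2]
  linear_combination (norm := abel) h

/-- membership props for g-diagonal components -/
theorem memP {g : R} (hg : g * g = g) (a : R) :
    g * (g * (a * g)) = g * (a * g) ∧ g * (a * g) * g = g * (a * g) := by
  constructor
  · rw [← alt1 g (a * g), hg]
  · have h := sw2' alt2 g (a * g) g
    have h2 : g * g * (a * g) = g * (g * (a * g)) := alt1 g (a * g)
    rw [h2, sub_self, neg_zero] at h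
    have h3 : a * g * g = a * g := by rw [alt2 g a, hg]
    rw [h3] at h
    exact sub_eq_zero.mp h


theorem flexE (u : R) : e * u * e = e * (u * e) := by
  have h := sw2' alt2 e u e
  rw [alt1 e u, sub_self, neg_zero] at h
  exact sub_eq_zero.mp h

theorem hfE : (1 - e) * (1 - e) = (1 : R) - e := by
  simp only [mul_sub, sub_mul, mul_one, one_mul, he]
  abel

/-- component properties of the four Peirce components of `t` -/
theorem comps (t : R) :
    e * (e * (t * e)) = e * (t * e) ∧
    e * (t * e) * e = e * (t * e) ∧
    e * (e * (t * (1 - e))) = e * (t * (1 - e)) ∧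
    e * (t * (1 - e)) * e = 0 ∧
    e * ((1 - e) * (t * e)) = 0 ∧
    (1 - e) * (t * e) * e = (1 - e) * (t * e) ∧
    e * ((1 - e) * (t * (1 - e))) = 0 ∧
    (1 - e) * (t * (1 - e)) * e = 0 := by
  have q1 := memP alt1 alt2 tor2 he he t
  have q2 := memP alt1 alt2 tor2 he (hfE alt1 alt2 tor2 he) t
  have hb0 : t * (1 - e) * e = 0 := by
    simp only [mul_sub, mul_one, sub_mul]
    rw [alt2 e t, he, sub_self]
  have hD1 : e * ((1 - e) * (t * (1 - e))) = 0 := by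
    have h := q2.1
    rw [sub_mul, one_mul] at h
    linear_combination (norm := abel) -h
  have hD2 : (1 - e) * (t * (1 - e)) * e = 0 := by
    have h := q2.2
    rw [mul_sub, mul_one] at h
    linear_combination (norm := abel) -h
  refine ⟨q1.1, q1.2, ?_, ?_, ?_, ?_, hD1, hD2⟩
  · rw [← alt1 e (t * (1 - e)), he]
  · rw [flexE alt1 alt2 tor2 he (t * (1 - e)), hb0, mul_zero]
  · simp only [sub_mul, one_mul, mul_sub]
    rw [q1.1, sub_self]
  · simp only [sub_mul, one_mul]
    rw [alt2 e t, he, q1.2]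

end withE

/-- Peirce decomposition -/
theorem pdec (e t : R) :
    e * (t * e) + e * (t * (1 - e)) + (1 - e) * (t * e) + (1 - e) * (t * (1 - e)) = t := by
  simp only [mul_sub, sub_mul, mul_one, one_mul]
  abel

end Stmt5Aux



open Stmt5Aux

theorem stmt5 {R : Type*} [NonAssocRing R]
    (alt1 : ∀ x y : R, x * x * y = x * (x * y))
    (alt2 : ∀ x y : R, y * x * x = y * (x * x))
    (tor2 : ∀ x : R, (2 : ℕ) • x = 0 → x = 0)
    (tor3 : ∀ x : R, (3 : ℕ) • x = 0 → x = 0)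
    (e₁ : R) (he : e₁ * e₁ = e₁) (he0 : e₁ ≠ 0) (he1 : e₁ ≠ 1)
    (hd1 : ∀ x : R, (∀ r : R, x * r * e₁ = 0) → x = 0)
    (hd2 : ∀ x : R, (∀ r : R, x * r * (1 - e₁) = 0) → x = 0)
    :
    {z : R | ∀ r : R, z * r = r * z} =
      {w : R | ∃ z11 ∈ peirceSet e₁ 0 0, ∃ z22 ∈ peirceSet e₁ 1 1,
        w = z11 + z22 ∧
        (∀ x ∈ peirceSet e₁ 0 1, (z11 + z22) * x = x * (z11 + z22)) ∧
        (∀ x ∈ peirceSet e₁ 1 0, (z11 + z22) * x = x * (z11 + z22))}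
    := by
  ext z
  simp only [Set.mem_setOf_eq]
  constructor
  · -- central ⇒ decomposition
    intro hz
    have hc := hz e₁
    have h1 : e₁ * (z * (1 - e₁)) = 0 := by
      simp only [mul_sub, mul_one]
      rw [hc, ← alt1 e₁ z, he, sub_self]
    have h2 : (1 - e₁) * (z * e₁) = 0 := by
      simp only [sub_mul, one_mul]
      rw [hc, ← alt1 e₁ z, he, sub_self]
    have hdec := pdec e₁ z
    rw [h1, h2] at hdec
    have hsum : e₁ * (z * e₁) + (1 - e₁) * (z * (1 - e₁)) = z := by
      linear_combination (norm := abel) hdec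
    refine ⟨e₁ * (z * e₁), ⟨z, by rw [pE0]⟩,
      (1 - e₁) * (z * (1 - e₁)), ⟨z, by rw [pE1]⟩, hsum.symm, ?_, ?_⟩
    · intro x _
      rw [hsum]; exact hz x
    · intro x _
      rw [hsum]; exact hz x
  · rintro ⟨z11, ⟨a1, ha1⟩, z22, ⟨a2, ha2⟩, hw, H12, H21⟩
    rw [pE0] at ha1
    rw [pE1] at ha2
    have p1 := memP alt1 alt2 tor2 he he a1
    rw [← ha1] at p1
    have p2 := memP alt1 alt2 tor2 he (hfE alt1 alt2 tor2 he) a2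
    rw [← ha2] at p2
    have hz22L : e₁ * z22 = 0 := by
      have h := p2.1
      rw [sub_mul, one_mul] at h
      linear_combination (norm := abel) -h
    have hz22R : z22 * e₁ = 0 := by
      have h := p2.2
      rw [mul_sub, mul_one] at h
      linear_combination (norm := abel) -h
    -- selective commuting in component form
    have Hx : ∀ u : R, e₁ * u = u → u * e₁ = 0 → z11 * u = u * z22 := by
      intro u huL huR
      have hmem : u ∈ peirceSet e₁ 0 1 := by
        refine ⟨u, ?_⟩
        rw [pE0, pE1]
        simp only [mul_sub, mul_one]
        rw [huR, mul_zero, sub_zero, huL]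
      have h := H12 u hmem
      have h5 : z22 * u = 0 := Z5 alt1 alt2 tor2 he hz22L hz22R huL huR
      have h1 : u * z11 = 0 := Z1 alt1 alt2 tor2 he huL huR p1.1 p1.2
      simp only [add_mul, mul_add] at h
      rw [h5, h1] at h
      linear_combination (norm := abel) h
    have Hy : ∀ u : R, e₁ * u = 0 → u * e₁ = u → z22 * u = u * z11 := by
      intro u huL huR
      have hmem : u ∈ peirceSet e₁ 1 0 := by
        refine ⟨u, ?_⟩
        rw [pE0, pE1, huR]
        simp only [sub_mul, one_mul]
        rw [huL, sub_zero]
      have h := H21 u hmem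
      have h2 : z11 * u = 0 := Z2 alt1 alt2 tor2 he p1.1 p1.2 huL huR
      have h6 : u * z22 = 0 := Z6 alt1 alt2 tor2 he huL huR hz22L hz22R
      simp only [add_mul, mul_add] at h
      rw [h2, h6] at h
      linear_combination (norm := abel) h
    have comm11 : ∀ s : R, e₁ * s = s → s * e₁ = s → z11 * s = s * z11 := by
      intro s hsL hsR
      have hcL : e₁ * (z11 * s - s * z11) = z11 * s - s * z11 := by
        rw [mul_sub, C11a alt1 alt2 tor2 he p1.1 p1.2 hsL,
          C11a alt1 alt2 tor2 he hsL hsR p1.1]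
      have hcR : (z11 * s - s * z11) * e₁ = z11 * s - s * z11 := by
        rw [sub_mul, C11b alt1 alt2 tor2 he hsL hsR p1.2,
          C11b alt1 alt2 tor2 he p1.1 p1.2 hsR]
      have hc : z11 * s - s * z11 = 0 := by
        refine hd2 _ ?_
        intro t
        obtain ⟨cA1, cA2, cB1, cB2, cC1, cC2, cD1, cD2⟩ := comps alt1 alt2 tor2 he t
        rw [← pdec e₁ t]
        simp only [mul_add, add_mul]
        have t1 : (z11 * s - s * z11) * (e₁ * (t * e₁)) * (1 - e₁) = 0 := by
          have hm : (z11 * s - s * z11) * (e₁ * (t * e₁)) * e₁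
              = (z11 * s - s * z11) * (e₁ * (t * e₁)) :=
            C11b alt1 alt2 tor2 he cA1 cA2 hcR
          rw [mul_sub, mul_one, hm, sub_self]
        have t2 : (z11 * s - s * z11) * (e₁ * (t * (1 - e₁))) * (1 - e₁) = 0 := by
          rw [Key1 alt1 alt2 tor2 he p1.1 p1.2 hz22L hz22R Hx hsL hsR cB1 cB2, zero_mul]
        have t3 : (z11 * s - s * z11) * ((1 - e₁) * (t * e₁)) * (1 - e₁) = 0 := by
          rw [Z2 alt1 alt2 tor2 he hcL hcR cC1 cC2, zero_mul]
        have t4 : (z11 * s - s * z11) * ((1 - e₁) * (t * (1 - e₁))) * (1 - e₁) = 0 := by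
          rw [Z3 alt1 alt2 tor2 he hcL hcR cD1 cD2, zero_mul]
        rw [t1, t2, t3, t4]
        simp
      linear_combination (norm := abel) hc
    have comm22 : ∀ s : R, e₁ * s = 0 → s * e₁ = 0 → z22 * s = s * z22 := by
      intro s hsL hsR
      have hcL : e₁ * (z22 * s - s * z22) = 0 := by
        rw [mul_sub, C22a alt1 alt2 tor2 he hz22L hz22R hsL,
          C22a alt1 alt2 tor2 he hsL hsR hz22L, sub_self]
      have hcR : (z22 * s - s * z22) * e₁ = 0 := by
        rw [sub_mul, C22b alt1 alt2 tor2 he hz22R hsL hsR,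
          C22b alt1 alt2 tor2 he hsR hz22L hz22R, sub_self]
      have hc : z22 * s - s * z22 = 0 := by
        refine hd1 _ ?_
        intro t
        obtain ⟨cA1, cA2, cB1, cB2, cC1, cC2, cD1, cD2⟩ := comps alt1 alt2 tor2 he t
        rw [← pdec e₁ t]
        simp only [mul_add, add_mul]
        have t1 : (z22 * s - s * z22) * (e₁ * (t * e₁)) * e₁ = 0 := by
          rw [Z4 alt1 alt2 tor2 he hcL hcR cA1 cA2, zero_mul]
        have t2 : (z22 * s - s * z22) * (e₁ * (t * (1 - e₁))) * e₁ = 0 := by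
          rw [Z5 alt1 alt2 tor2 he hcL hcR cB1 cB2, zero_mul]
        have t3 : (z22 * s - s * z22) * ((1 - e₁) * (t * e₁)) * e₁ = 0 := by
          rw [Key2 alt1 alt2 tor2 he p1.1 p1.2 hz22L hz22R Hy hsL hsR cC1 cC2, zero_mul]
        have t4 : (z22 * s - s * z22) * ((1 - e₁) * (t * (1 - e₁))) * e₁ = 0 :=
          C22b alt1 alt2 tor2 he hcR cD1 cD2
        rw [t1, t2, t3, t4]
        simp
      linear_combination (norm := abel) hc
    -- finish
    intro r
    obtain ⟨cA1, cA2, cB1, cB2, cC1, cC2, cD1, cD2⟩ := comps alt1 alt2 tor2 he r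
    rw [hw, ← pdec e₁ r]
    simp only [mul_add, add_mul]
    rw [comm11 _ cA1 cA2, Z4 alt1 alt2 tor2 he hz22L hz22R cA1 cA2,
      Hx _ cB1 cB2, Z5 alt1 alt2 tor2 he hz22L hz22R cB1 cB2,
      Z2 alt1 alt2 tor2 he p1.1 p1.2 cC1 cC2, Hy _ cC1 cC2,
      Z3 alt1 alt2 tor2 he p1.1 p1.2 cD1 cD2, comm22 _ cD1 cD2,
      Z3 alt1 alt2 tor2 he cA1 cA2 hz22L hz22R,
      Z1 alt1 alt2 tor2 he cB1 cB2 p1.1 p1.2,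
      Z6 alt1 alt2 tor2 he cC1 cC2 hz22L hz22R,
      Z4 alt1 alt2 tor2 he cD1 cD2 p1.1 p1.2]
    abel
end

section
/- Let R be a unital 2- and 3-torsion free alternative ring with a nontrivial idempotent e_1, e_2 = 1 − e_1, satisfying: for each i ∈ {1,2}, if x ∈ R has (x r)e_i = 0 for all r ∈ R, then x = 0. Let φ : R → R be an additive commuting map. Then φ(1) ∈ R_11 + R_22 and φ(e_i) ∈ R_11 + R_22 for i = 1,2 (i.e. e_1 φ(1) e_2 = e_2 φ(1) e_1 = 0 and e_1 φ(e_i) e_2 = e_2 φ(e_i) e_1 = 0). Moreover, for each i ∈ {1,2} there exists z_i ∈ Z(R) such that e_i φ(1) e_i = z_i e_i. -/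
theorem stmt7 {R : Type*} [NonAssocRing R]
    (alt1 : ∀ x y : R, x * x * y = x * (x * y))
    (alt2 : ∀ x y : R, y * x * x = y * (x * x))
    (tor2 : ∀ x : R, (2 : ℕ) • x = 0 → x = 0)
    (tor3 : ∀ x : R, (3 : ℕ) • x = 0 → x = 0)
    (e₁ : R) (he : e₁ * e₁ = e₁) (he0 : e₁ ≠ 0) (he1 : e₁ ≠ 1)
    (hd1 : ∀ x : R, (∀ r : R, x * r * e₁ = 0) → x = 0)
    (hd2 : ∀ x : R, (∀ r : R, x * r * (1 - e₁) = 0) → x = 0)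
    (φ : R → R) (hadd : ∀ x y : R, φ (x + y) = φ x + φ y)
    (hcomm : ∀ x : R, φ x * x = x * φ x)
    :
    (e₁ * (φ 1 * (1 - e₁)) = 0 ∧ (1 - e₁) * (φ 1 * e₁) = 0) ∧
    (∀ i : Fin 2, e₁ * (φ (peirceE e₁ i) * (1 - e₁)) = 0 ∧
        (1 - e₁) * (φ (peirceE e₁ i) * e₁) = 0) ∧
    (∀ i : Fin 2, ∃ z : R, (∀ r : R, z * r = r * z) ∧
        peirceE e₁ i * (φ 1 * peirceE e₁ i) = z * peirceE e₁ i)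
    := by
  -- φ(1) is central: linearize the commuting condition at 1 + y.
  have hc1 : ∀ y : R, φ 1 * y = y * φ 1 := by
    intro y
    have h := hcomm (1 + y)
    rw [hadd] at h
    simp only [add_mul, mul_add, one_mul, mul_one] at h
    rw [hcomm y] at h
    have h6 := sub_eq_zero_of_eq h
    have h5 : φ 1 * y - y * φ 1 = 0 := by rw [← h6]; abel
    exact sub_eq_zero.mp h5
  -- key lemma: if a commutes with e₁ then both off-diagonal components vanish
  have key : ∀ a : R, a * e₁ = e₁ * a →
      e₁ * (a * (1 - e₁)) = 0 ∧ (1 - e₁) * (a * e₁) = 0 := by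
    intro a ha
    constructor
    · have : e₁ * (a * (1 - e₁)) = e₁ * a - e₁ * (e₁ * a) := by
        rw [mul_sub, mul_one, ha, mul_sub]
      rw [this, ← alt1, he, sub_self]
    · have : (1 - e₁) * (a * e₁) = e₁ * a - e₁ * (e₁ * a) := by
        rw [sub_mul, one_mul, ha]
      rw [this, ← alt1, he, sub_self]
  have he2 : (1 - e₁) * (1 - e₁) = 1 - e₁ := by
    rw [mul_sub, mul_one, sub_mul, one_mul, he, sub_self, sub_zero]
  refine ⟨key (φ 1) (hc1 e₁), ?_, ?_⟩
  · intro i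
    fin_cases i <;> simp only [peirceE, Fin.isValue, Fin.mk_one, one_ne_zero,
      if_true, if_false, show ((⟨0, by norm_num⟩ : Fin 2) = 0) = True by simp,
      show ((⟨1, by norm_num⟩ : Fin 2) = 0) = False by simp]
    · exact key (φ e₁) (hcomm e₁)
    · have hx := hcomm (1 - e₁)
      simp only [mul_sub, sub_mul, mul_one, one_mul] at hx
      rw [sub_right_inj] at hx
      exact key (φ (1 - e₁)) hx
  · intro i
    refine ⟨φ 1, hc1, ?_⟩
    fin_cases i <;> simp only [peirceE, Fin.isValue,
      show ((⟨0, by norm_num⟩ : Fin 2) = 0) = True by simp,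
      show ((⟨1, by norm_num⟩ : Fin 2) = 0) = False by simp, if_true, if_false]
    · rw [hc1 e₁, ← alt1, he]
    · rw [hc1 (1 - e₁), ← alt1, he2]
end

section
/- Let R be a unital 2- and 3-torsion free alternative ring with a nontrivial idempotent e_1, e_2 = 1 − e_1, satisfying: for each i ∈ {1,2}, if x ∈ R has (x r)e_i = 0 for all r ∈ R, then x = 0. Let φ : R → R be an additive commuting map. Then for all i ≠ j in {1,2} and every x_ij ∈ R_ij: e_j φ(x_ij) e_i = 0. -/
private lemma L1 {R : Type*} [NonAssocRing R]
    (alt1 : ∀ x y : R, x * x * y = x * (x * y)) (x y z : R) :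
    x*y*z + y*x*z = x*(y*z) + y*(x*z) := by
  have h : x*y*z + y*x*z - (x*(y*z) + y*(x*z))
      = ((x+y)*(x+y)*z - (x+y)*((x+y)*z)) - (x*x*z - x*(x*z)) - (y*y*z - y*(y*z)) := by
    simp only [add_mul, mul_add]; abel
  rw [sub_eq_zero_of_eq (alt1 (x+y) z), sub_eq_zero_of_eq (alt1 x z),
      sub_eq_zero_of_eq (alt1 y z), sub_zero, sub_zero] at h
  exact sub_eq_zero.mp h

private lemma L2 {R : Type*} [NonAssocRing R]
    (alt2 : ∀ x y : R, y * x * x = y * (x * x)) (z x y : R) :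
    z*x*y + z*y*x = z*(x*y) + z*(y*x) := by
  have h : z*x*y + z*y*x - (z*(x*y) + z*(y*x))
      = (z*(x+y)*(x+y) - z*((x+y)*(x+y))) - (z*x*x - z*(x*x)) - (z*y*y - z*(y*y)) := by
    simp only [add_mul, mul_add]; abel
  rw [sub_eq_zero_of_eq (alt2 (x+y) z), sub_eq_zero_of_eq (alt2 x z),
      sub_eq_zero_of_eq (alt2 y z), sub_zero, sub_zero] at h
  exact sub_eq_zero.mp h

private lemma key {R : Type*} [NonAssocRing R]
    (alt1 : ∀ x y : R, x * x * y = x * (x * y))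
    (alt2 : ∀ x y : R, y * x * x = y * (x * x))
    (tor2 : ∀ x : R, (2 : ℕ) • x = 0 → x = 0)
    (e a d c x : R) (he : e * e = e)
    (hx : x = e * (a * (1 - e)))
    (hde : d * e = e * d)
    (hc : c * e - e * c = x * d - d * x) :
    (1 - e) * (c * e) = 0 := by
  have flex : ∀ y : R, e * y * e = e * (y * e) := by
    intro y
    have h := L1 alt1 e y e
    have h2 := alt2 e y
    have h3 : e*y*e + y*e*e = e*(y*e) + y*e*e := by rw [h, h2]
    exact add_right_cancel h3
  -- x facts
  have hye : (a * (1 - e)) * e = 0 := by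
    rw [mul_sub, mul_one, sub_mul, alt2, he, sub_self]
  have hxe : x * e = 0 := by rw [hx, flex, hye, mul_zero]
  have hex : e * x = x := by rw [hx, ← alt1, he]
  have hede : e * d * e = e * d := by rw [flex, hde, ← alt1, he]
  obtain ⟨v, hv⟩ : ∃ v : R, v = e * d := ⟨_, rfl⟩
  obtain ⟨u, hu⟩ : ∃ u : R, u = d - e * d := ⟨_, rfl⟩
  have hev : e * v = v := by rw [hv, ← alt1, he]
  have hve : v * e = v := by rw [hv, hede]
  have hue : u * e = 0 := by rw [hu, sub_mul, hde, hede, sub_self]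
  have heu : e * u = 0 := by rw [hu, mul_sub, ← alt1, he, sub_self]
  -- x * v = 0
  have h5 := L2 alt2 x e v
  rw [hxe, zero_mul, zero_add, hev, hve] at h5
  -- h5 : x*v*e = x*v + x*v
  have h6 : x*v*e*e = x*v*e := by rw [alt2, he]
  rw [h5, add_mul, h5] at h6
  -- h6 : (x*v + x*v) + (x*v + x*v) = x*v + x*v
  have h7 : x*v + x*v = 0 := by
    have := h6
    nth_rewrite 3 [← zero_add (x*v + x*v)] at this
    exact add_right_cancel this
  have hxv : x * v = 0 := tor2 _ (by rw [two_nsmul]; exact h7)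
  -- u * x = 0
  have h8 := L2 alt2 u e x
  rw [hue, zero_mul, hex, hxe, mul_zero, add_zero, zero_add] at h8
  -- h8 : u*x*e = u*x
  have h9 := L1 alt1 e u x
  rw [heu, zero_mul, hue, zero_mul, zero_add, hex] at h9
  -- h9 : 0 = e*(u*x) + u*x
  have hg : e * (u*x) = -(u*x) := eq_neg_of_add_eq_zero_left h9.symm
  have h10 := alt1 e (u*x)
  rw [he, hg, mul_neg, hg, neg_neg] at h10
  -- h10 : -(u*x) = u*x
  have hux : u * x = 0 := by
    refine tor2 _ ?_
    rw [two_nsmul]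
    nth_rewrite 1 [← h10]
    exact neg_add_cancel _
  -- e * (x*u) = x*u
  have h11 := L1 alt1 e x u
  rw [hex, hxe, zero_mul, heu, mul_zero, add_zero, add_zero] at h11
  -- h11 : x*u = e*(x*u)
  -- e * (v*x) = v*x
  have h12 := L1 alt1 e v x
  rw [hev, hve, hex] at h12
  -- h12 : v*x + v*x = e*(v*x) + v*x
  have h12' : v*x = e*(v*x) := add_right_cancel h12
  -- final
  have hd : d = v + u := by rw [hv, hu]; abel
  have hxd : x * d = x * u := by rw [hd, mul_add, hxv, zero_add]
  have hdx : d * x = v * x := by rw [hd, add_mul, hux, add_zero]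
  rw [hxd, hdx] at hc
  have hce : c * e = x*u - v*x + e*c := by
    rw [← hc]; abel
  rw [sub_mul, one_mul, hce, mul_add, mul_sub, ← h11, ← h12', ← alt1, he, sub_self]

theorem stmt9 {R : Type*} [NonAssocRing R]
    (alt1 : ∀ x y : R, x * x * y = x * (x * y))
    (alt2 : ∀ x y : R, y * x * x = y * (x * x))
    (tor2 : ∀ x : R, (2 : ℕ) • x = 0 → x = 0)
    (tor3 : ∀ x : R, (3 : ℕ) • x = 0 → x = 0)
    (e₁ : R) (he : e₁ * e₁ = e₁) (he0 : e₁ ≠ 0) (he1 : e₁ ≠ 1)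
    (hd1 : ∀ x : R, (∀ r : R, x * r * e₁ = 0) → x = 0)
    (hd2 : ∀ x : R, (∀ r : R, x * r * (1 - e₁) = 0) → x = 0)
    (φ : R → R) (hadd : ∀ x y : R, φ (x + y) = φ x + φ y)
    (hcomm : ∀ x : R, φ x * x = x * φ x)
    :
    ∀ i j : Fin 2, i ≠ j → ∀ x ∈ peirceSet e₁ i j,
      peirceE e₁ j * (φ x * peirceE e₁ i) = 0
    := by
  have lin : ∀ w z : R, φ w * z + φ z * w = w * φ z + z * φ w := by
    intro w z
    have h0 : φ w * z + φ z * w - (w * φ z + z * φ w)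
        = (φ (w+z) * (w+z) - (w+z) * φ (w+z)) - (φ w * w - w * φ w)
          - (φ z * z - z * φ z) := by
      rw [hadd]; simp only [add_mul, mul_add]; abel
    rw [sub_eq_zero_of_eq (hcomm (w+z)), sub_eq_zero_of_eq (hcomm w),
        sub_eq_zero_of_eq (hcomm z), sub_zero, sub_zero] at h0
    exact sub_eq_zero.mp h0
  have hP0 : peirceE e₁ 0 = e₁ := if_pos rfl
  have hP1 : peirceE e₁ 1 = 1 - e₁ := if_neg (by decide)
  intro i j hij x hx
  fin_cases i <;> fin_cases j <;> try exact absurd rfl hij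
  · -- i = 0, j = 1
    obtain ⟨a, ha⟩ := hx
    have ha' : x = e₁ * (a * (1 - e₁)) := ha
    show (1 - e₁) * (φ x * e₁) = 0
    exact key alt1 alt2 tor2 e₁ a (φ e₁) (φ x) x he ha' (hcomm e₁)
      (sub_eq_sub_iff_add_eq_add.mpr (lin x e₁))
  · -- i = 1, j = 0
    obtain ⟨a, ha⟩ := hx
    have ha : x = (1 - e₁) * (a * e₁) := ha
    show e₁ * (φ x * (1 - e₁)) = 0
    have he' : (1 - e₁) * (1 - e₁) = 1 - e₁ := by
      simp only [mul_sub, sub_mul, mul_one, one_mul, he]; abel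
    have ha' : x = (1 - e₁) * (a * (1 - (1 - e₁))) := by rw [sub_sub_cancel]; exact ha
    have := key alt1 alt2 tor2 (1 - e₁) a (φ (1 - e₁)) (φ x) x he' ha'
      (hcomm (1 - e₁)) (sub_eq_sub_iff_add_eq_add.mpr (lin x (1 - e₁)))
    rwa [sub_sub_cancel] at this
end

section
/- Let R be a unital 2- and 3-torsion free alternative ring with a nontrivial idempotent e_1, e_2 = 1 − e_1, satisfying: for each i ∈ {1,2}, if x ∈ R has (x r)e_i = 0 for all r ∈ R, then x = 0. Let φ : R → R be an additive commuting map. Then for all i ≠ j in {1,2} and every x_ij ∈ R_ij: e_i φ(x_ij) e_j = [e_i φ(e_i) e_i + e_j φ(e_i) e_j, x_ij] = −[e_j φ(e_j) e_j + e_i φ(e_j) e_i, x_ij]. -/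
section AltAux

variable {R : Type*} [NonAssocRing R]

def asr (a b c : R) : R := a * b * c - a * (b * c)

theorem asr_eq {a b c : R} (h : asr a b c = 0) : a * b * c = a * (b * c) :=
  sub_eq_zero.mp h

theorem asr_one1 (b c : R) : asr 1 b c = 0 := by simp [asr]
theorem asr_one2 (a c : R) : asr a 1 c = 0 := by simp [asr]
theorem asr_one3 (a b : R) : asr a b 1 = 0 := by simp [asr]

theorem asr_sub1 (a b c d : R) : asr (a - b) c d = asr a c d - asr b c d := by
  simp only [asr, sub_mul, mul_sub]; abel
theorem asr_sub2 (a b c d : R) : asr a (b - c) d = asr a b d - asr a c d := by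
  simp only [asr, sub_mul, mul_sub]; abel
theorem asr_sub3 (a b c d : R) : asr a b (c - d) = asr a b c - asr a b d := by
  simp only [asr, sub_mul, mul_sub]; abel
theorem asr_add2 (a b c d : R) : asr a (b + c) d = asr a b d + asr a c d := by
  simp only [asr, add_mul, mul_add]; abel

theorem asr_aab (alt1 : ∀ x y : R, x * x * y = x * (x * y)) (a b : R) :
    asr a a b = 0 := by simp [asr, alt1]

theorem asr_baa (alt2 : ∀ x y : R, y * x * x = y * (x * x)) (a b : R) :
    asr a b b = 0 := by simp [asr, alt2]

theorem asr_swap12 (alt1 : ∀ x y : R, x * x * y = x * (x * y)) (a b c : R) :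
    asr a b c = -asr b a c := by
  have key : asr a b c + asr b a c
      = asr (a + b) (

a + b) c - asr a a c - asr b b c := by
    simp only [asr, add_mul, mul_add]; abel
  have h0 : asr a b c + asr b a c = 0 := by
    rw [key]; simp [asr_aab alt1]
  exact eq_neg_of_add_eq_zero_left h0

theorem asr_swap23 (alt2 : ∀ x y : R, y * x * x = y * (x * x)) (a b c : R) :
    asr a b c = -asr a c b := by
  have key : asr a b c + asr a c b
      = asr a (b + c) (b + c) - asr a b b - asr a c c := by
    simp only [asr, add_mul, mul_add]; abel
  have h0 : asr a b c + asr a c b = 0 := by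
    rw [key]; simp [asr_baa alt2]
  exact eq_neg_of_add_eq_zero_left h0

theorem asr_flex (alt1 : ∀ x y : R, x * x * y = x * (x * y))
    (alt2 : ∀ x y : R, y * x * x = y * (x * x)) (a b : R) :
    asr a b a = 0 := by
  rw [asr_swap12 alt1, asr_baa alt2, neg_zero]

end AltAux

theorem master {R : Type*} [NonAssocRing R]
    (alt1 : ∀ x y : R, x * x * y = x * (x * y))
    (alt2 : ∀ x y : R, y * x * x = y * (x * x))
    (φ : R → R) (hadd : ∀ x y : R, φ (x + y) = φ x + φ y)
    (hcomm : ∀ x : R, φ x * x = x * φ x)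
    (e f : R) (he : e * e = e) (hf : f = 1 - e)
    (x a : R) (hx : x = e * (a * f)) :
    e * (φ x * f) =
      (e * (φ e * e) + f * (φ e * f)) * x - x * (e * (φ e * e) + f * (φ e * f)) ∧
    e * (φ x * f) =
      -((f * (φ f * f) + e * (φ f * e)) * x - x * (f * (φ f * f) + e * (φ f * e))) := by
  -- basic products
  have hef : e * f = 0 := by rw [hf, mul_sub, mul_one, he, sub_self]
  have hfe : f * e = 0 := by rw [hf, sub_mul, one_mul, he, sub_self]
  have hff : f * f = f := by rw [hf, sub_mul, one_mul, mul_sub, mul_one, he]; abel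
  have hef1 : e + f = 1 := by rw [hf]; abel
  -- associator vanishing with two entries in {e, f}
  have A1 : ∀ z : R, asr e e z = 0 := fun z => asr_aab alt1 e z
  have A2 : ∀ z : R, asr z e e = 0 := fun z => asr_baa alt2 z e
  have A3 : ∀ z : R, asr e z e = 0 := fun z => asr_flex alt1 alt2 e z
  have A4 : ∀ z : R, asr e z f = 0 := by
    intro z; rw [hf, asr_sub3, asr_one3, asr_flex alt1 alt2]; abel
  have A5 : ∀ z : R, asr f z e = 0 := by
    intro z; rw [hf, asr_sub1, asr_one1, asr_flex alt1 alt2]; abel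
  have A6 : ∀ z : R, asr e f z = 0 := by
    intro z; rw [hf, asr_sub2, asr_one2, asr_aab alt1]; abel
  have A7 : ∀ z : R, asr z f e = 0 := by
    intro z; rw [hf, asr_sub2, asr_one2, asr_baa alt2]; abel
  have A9 : ∀ z : R, asr f f z = 0 := fun z => asr_aab alt1 f z
  -- Peirce facts for x
  have hex : e * x = x := by
    rw [hx, ← asr_eq (A1 (a * f)), he]
  have hxf : x * f = x := by
    rw [hx, asr_eq (A4 (a * f)), asr_eq (asr_baa alt2 a f), hff]
  have hxe : x * e = 0 := by
    have he' : e = 1 - f := by rw [hf]; abel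
    rw [he', mul_sub, mul_one, hxf, sub_self]
  have hfx : f * x = 0 := by
    rw [hf, sub_mul, one_mul, hex, sub_self]
  -- tail helper: e * t = 0 → e * (t * f) = 0
  have tail : ∀ t : R, e * t = 0 → e * (t * f) = 0 := by
    intro t ht
    rw [hf, mul_sub, mul_one, mul_sub, ht, ← asr_eq (A3 t), ht, zero_mul, sub_self]
  -- component lemmas
  have Ld : ∀ B : R, e * ((e * (B * e) * x) * f) = e * (B * e) * x := by
    intro B
    set w := e * (B * e) with hw
    have hew : e * w = w := by rw [hw, ← asr_eq (A1 (B * e)), he]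
    have hwe : w * e = w := by
      rw [hw, asr_eq (A3 (B * e)), asr_eq (A2 B), he]
    have h1 : asr w e x = 0 := by simp [asr, hwe, hex]
    have h2 : asr e w x = 0 := by rw [asr_swap12 alt1, h1, neg_zero]
    have h3 : asr w x e = 0 := by rw [asr_swap23 alt2, h1, neg_zero]
    have hewx : e * (w * x) = w * x := by rw [← asr_eq h2, hew]
    have hwxe : w * x * e = 0 := by rw [asr_eq h3, hxe, mul_zero]
    have hwxf : (w * x) * f = w * x := by
      rw [hf, mul_sub, mul_one, hwxe, sub_zero]
    rw [hwxf, hewx]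
  have Lc : ∀ B : R, e * ((e * (B * f) * x) * f) = 0 := by
    intro B
    set v := e * (B * f) with hv
    have hve : v * e = 0 := by
      rw [hv, asr_eq (A3 (B * f)), asr_eq (A7 B), hfe, mul_zero, mul_zero]
    have h1 : asr v e x = -(v * x) := by simp [asr, hve, hex]
    have h2 : asr e v x = v * x := by rw [asr_swap12 alt1, h1, neg_neg]
    have hev : e * v = v := by rw [hv, ← asr_eq (A1 (B * f)), he]
    have h3 : e * (v * x) = 0 := by
      have h2' := h2
      simp only [asr] at h2'
      rw [hev] at h2'
      exact sub_eq_self.mp h2'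
    exact tail (v * x) h3
  have Lb : ∀ B : R, e * ((f * (B * e) * x) * f) = 0 := by
    intro B
    set u := f * (B * e) with hu
    have heu : e * u = 0 := by
      rw [hu, ← asr_eq (A6 (B * e)), hef, zero_mul]
    have hue : u * e = u := by
      rw [hu, asr_eq (A5 (B * e)), asr_eq (A2 B), he]
    have h1 : asr u e x = 0 := by simp [asr, hue, hex]
    have h2 : asr e u x = 0 := by rw [asr_swap12 alt1, h1, neg_zero]
    have h3 : e * (u * x) = 0 := by
      have h2' := h2
      simp only [asr] at h2'
      rw [heu, zero_mul, zero_sub, neg_eq_zero] at h2'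
      exact h2'
    exact tail (u * x) h3
  have La : ∀ B : R, f * (B * f) * x = 0 := by
    intro B
    set z := f * (B * f) with hz
    have hze : z * e = 0 := by
      rw [hz, asr_eq (A5 (B * f)), asr_eq (A7 B), hfe, mul_zero, mul_zero]
    have hfz : f * z = z := by rw [hz, ← asr_eq (A9 (B * f)), hff]
    have hxfz : asr x f z = 0 := by simp [asr, hxf, hfz]
    have hsum : asr x e z + asr x f z = 0 := by
      rw [← asr_add2, hef1, asr_one2]
    have hxez : asr x e z = 0 := by rw [hxfz, add_zero] at hsum; exact hsum
    have hzex : asr z e x = 0 := by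
      rw [asr_swap12 alt1, asr_swap23 alt2, asr_swap12 alt1, hxez]; abel
    calc z * x = z * (e * x) := by rw [hex]
      _ = z * e * x := (asr_eq hzex).symm
      _ = 0 := by rw [hze, zero_mul]
  have La' : ∀ B : R, x * (e * (B * e)) = 0 := by
    intro B
    set w := e * (B * e) with hw
    have hew : e * w = w := by rw [hw, ← asr_eq (A1 (B * e)), he]
    have hwe : w * e = w := by
      rw [hw, asr_eq (A3 (B * e)), asr_eq (A2 B), he]
    have h1 : asr w e x = 0 := by simp [asr, hwe, hex]
    have h2 : asr x e w = 0 := by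
      rw [asr_swap12 alt1, asr_swap23 alt2, asr_swap12 alt1, h1]; abel
    have h3 : asr x e w = -(x * w) := by simp [asr, hxe, hew]
    rw [h3] at h2
    exact neg_eq_zero.mp h2
  have Lb' : ∀ B : R, e * ((x * (e * (B * f))) * f) = 0 := by
    intro B
    set v := e * (B * f) with hv
    have hev : e * v = v := by rw [hv, ← asr_eq (A1 (B * f)), he]
    have h1 : asr x e v = -(x * v) := by simp [asr, hxe, hev]
    have h2 : asr e x v = x * v := by rw [asr_swap12 alt1, h1, neg_neg]
    have h3 : e * (x * v) = 0 := by
      have h2' := h2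
      simp only [asr] at h2'
      rw [hex] at h2'
      exact sub_eq_self.mp h2'
    exact tail (x * v) h3
  have Lc' : ∀ B : R, e * ((x * (f * (B * e))) * f) = 0 := by
    intro B
    set u := f * (B * e) with hu
    have heu : e * u = 0 := by
      rw [hu, ← asr_eq (A6 (B * e)), hef, zero_mul]
    have hue : u * e = u := by
      rw [hu, asr_eq (A5 (B * e)), asr_eq (A2 B), he]
    have h0 : asr x e u = 0 := by simp [asr, hxe, heu]
    have h1 : asr x u e = 0 := by rw [asr_swap23 alt2, h0, neg_zero]
    have h2 : x * u * e = x * u := by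
      have h1' := h1
      simp only [asr] at h1'
      rw [hue] at h1'
      exact sub_eq_zero.mp h1'
    rw [hf, mul_sub, mul_one, h2, sub_self, mul_zero]
  have Ld' : ∀ B : R, e * ((x * (f * (B * f))) * f) = x * (f * (B * f)) := by
    intro B
    set z := f * (B * f) with hz
    have hze : z * e = 0 := by
      rw [hz, asr_eq (A5 (B * f)), asr_eq (A7 B), hfe, mul_zero, mul_zero]
    have hfz : f * z = z := by rw [hz, ← asr_eq (A9 (B * f)), hff]
    have hxfz : asr x f z = 0 := by simp [asr, hxf, hfz]
    have hsum : asr x e z + asr x f z = 0 := by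
      rw [← asr_add2, hef1, asr_one2]
    have hxez : asr x e z = 0 := by rw [hxfz, add_zero] at hsum; exact hsum
    have h0 : asr e x z = 0 := by rw [asr_swap12 alt1, hxez, neg_zero]
    have h1 : e * (x * z) = x * z := by
      rw [← asr_eq h0, hex]
    have h0' : asr x z e = 0 := by rw [asr_swap23 alt2, hxez, neg_zero]
    have h2 : x * z * e = 0 := by rw [asr_eq h0', hze, mul_zero]
    rw [hf, mul_sub, mul_one, h2, sub_zero, h1]
  -- decomposition
  have hdecomp : ∀ A : R,
      A = e * (A * e) + e * (A * f) + (f * (A * e) + f * (A * f)) := by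
    intro A
    rw [hf]
    simp only [mul_sub, sub_mul, mul_one, one_mul]
    abel
  have L1 : ∀ A : R, e * ((A * x) * f) = e * (A * e) * x := by
    intro A
    conv_lhs => rw [hdecomp A]
    simp only [add_mul, mul_add]
    rw [La A, zero_mul, mul_zero, Ld A, Lc A, Lb A]
    abel
  have L2 : ∀ A : R, e * ((x * A) * f) = x * (f * (A * f)) := by
    intro A
    conv_lhs => rw [hdecomp A]
    simp only [mul_add, add_mul]
    rw [La' A, zero_mul, mul_zero, Lb' A, Lc' A, Ld' A]
    abel
  -- linearized commuting
  have hlin : ∀ u v : R, φ u * v + φ v * u = v * φ u + u * φ v := by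
    intro u v
    have h' : φ u * v + φ v * u - (v * φ u + u * φ v) = 0 := by
      calc φ u * v + φ v * u - (v * φ u + u * φ v)
          = (φ (u + v) * (u + v) - (u + v) * φ (u + v))
            - (φ u * u - u * φ u) - (φ v * v - v * φ v) := by
            rw [hadd]; simp only [add_mul, mul_add]; abel
        _ = 0 := by rw [hcomm, hcomm, hcomm]; abel
    exact sub_eq_zero.mp h'
  have K1 : φ x * e - e * φ x = x * φ e - φ e * x := by
    rw [sub_eq_sub_iff_add_eq_add]
    exact (hlin x e).trans (add_comm _ _)
  have K2 : φ 1 * x = x * φ 1 := by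
    have h := hlin x 1
    rw [mul_one, one_mul] at h
    exact add_left_cancel h
  -- main computation
  have happ : e * ((φ x * e - e * φ x) * f) = e * ((x * φ e - φ e * x) * f) := by
    rw [K1]
  rw [sub_mul, mul_sub, sub_mul, mul_sub] at happ
  have T1 : e * ((φ x * e) * f) = 0 := by
    have : (φ x * e) * f = 0 := by
      rw [hf, mul_sub, mul_one, asr_eq (A2 (φ x)), he, sub_self]
    rw [this, mul_zero]
  have T2 : e * ((e * φ x) * f) = e * (φ x * f) := by
    rw [asr_eq (A4 (φ x)), ← asr_eq (A1 (φ x * f)), he]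
  rw [T1, T2, L2 (φ e), L1 (φ e)] at happ
  -- happ : 0 - e * (φ x * f) = x * (f * (φ e * f)) - e * (φ e * e) * x
  have hPx : e * (φ x * f) = e * (φ e * e) * x - x * (f * (φ e * f)) := by
    rw [zero_sub, neg_eq_iff_eq_neg, neg_sub] at happ
    exact happ
  have hone : φ e + φ f = φ 1 := by
    rw [← hadd, hef1]
  have hK2 : e * (φ 1 * e) * x = x * (f * (φ 1 * f)) := by
    have h : e * ((φ 1 * x) * f) = e * ((x * φ 1) * f) := by rw [K2]
    rw [L1 (φ 1), L2 (φ 1)] at h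
    exact h
  constructor
  · rw [add_mul, mul_add, La (φ e), La' (φ e), hPx]
    abel
  · rw [add_mul, mul_add, La (φ f), La' (φ f), hPx]
    have hsum : e * (φ e * e) * x + e * (φ f * e) * x
        = x * (f * (φ e * f)) + x * (f * (φ f * f)) := by
      have h1 : e * (φ e * e) * x + e * (φ f * e) * x = e * (φ 1 * e) * x := by
        rw [← hone]
        simp only [add_mul, mul_add]
      have h2 : x * (f * (φ e * f)) + x * (f * (φ f * f)) = x * (f * (φ 1 * f)) := by
        rw [← hone]
        simp only [add_mul, mul_add]
      rw [h1, h2, hK2]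
    -- goal: e*(φe*e)*x - x*(f*(φe*f)) = -((0 + e*(φ f*e)*x) - (x*(f*(φ f*f)) + 0))
    have goal' : e * (φ e * e) * x - x * (f * (φ e * f))
        = x * (f * (φ f * f)) - e * (φ f * e) * x := by
      rw [sub_eq_sub_iff_add_eq_add, hsum]
      abel
    rw [goal']
    abel




theorem stmt10 {R : Type*} [NonAssocRing R]
    (alt1 : ∀ x y : R, x * x * y = x * (x * y))
    (alt2 : ∀ x y : R, y * x * x = y * (x * x))
    (tor2 : ∀ x : R, (2 : ℕ) • x = 0 → x = 0)
    (tor3 : ∀ x : R, (3 : ℕ) • x = 0 → x = 0)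
    (e₁ : R) (he : e₁ * e₁ = e₁) (he0 : e₁ ≠ 0) (he1 : e₁ ≠ 1)
    (hd1 : ∀ x : R, (∀ r : R, x * r * e₁ = 0) → x = 0)
    (hd2 : ∀ x : R, (∀ r : R, x * r * (1 - e₁) = 0) → x = 0)
    (φ : R → R) (hadd : ∀ x y : R, φ (x + y) = φ x + φ y)
    (hcomm : ∀ x : R, φ x * x = x * φ x)
    :
    ∀ i j : Fin 2, i ≠ j → ∀ x ∈ peirceSet e₁ i j,
      (peirceE e₁ i * (φ x * peirceE e₁ j) =
        (peirceE e₁ i * (φ (peirceE e₁ i) * peirceE e₁ i) +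
         peirceE e₁ j * (φ (peirceE e₁ i) * peirceE e₁ j)) * x -
        x * (peirceE e₁ i * (φ (peirceE e₁ i) * peirceE e₁ i) +
         peirceE e₁ j * (φ (peirceE e₁ i) * peirceE e₁ j))) ∧
      (peirceE e₁ i * (φ x * peirceE e₁ j) =
        -((peirceE e₁ j * (φ (peirceE e₁ j) * peirceE e₁ j) +
           peirceE e₁ i * (φ (peirceE e₁ j) * peirceE e₁ i)) * x -
          x * (peirceE e₁ j * (φ (peirceE e₁ j) * peirceE e₁ j) +
           peirceE e₁ i * (φ (peirceE e₁ j) * peirceE e₁ i))))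
    := by
  intro i j hij x hx
  obtain ⟨a, hxa⟩ := hx
  fin_cases i <;> fin_cases j <;> simp only [peirceE] at hxa ⊢
  · exact absurd rfl hij
  · exact master alt1 alt2 φ hadd hcomm e₁ (1 - e₁) he rfl x a hxa
  · have he' : (1 - e₁) * (1 - e₁) = 1 - e₁ := by
      rw [sub_mul, one_mul, mul_sub, mul_one, he]; abel
    exact master alt1 alt2 φ hadd hcomm (1 - e₁) e₁ he' (sub_sub_cancel 1 e₁).symm x a hxa
  · exact absurd rfl hij
end

section
/- Let R be a unital 2- and 3-torsion free alternative ring with a nontrivial idempotent e_1, e_2 = 1 − e_1, satisfying: for each i ∈ {1,2}, if x ∈ R has (x r)e_i = 0 for all r ∈ R, then x = 0. Let φ : R → R be an additive commuting map. Then for all i ≠ j in {1,2} and every x_ij ∈ R_ij: [e_i φ(x_ij) e_i + e_j φ(x_ij) e_j, x_ij] = 0. -/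
section AltAux

variable {R : Type*} [NonAssocRing R]

/-- Linearized left alternative law. -/
lemma myLin1 (alt1 : ∀ x y : R, x * x * y = x * (x * y)) (a b c : R) :
    a * b * c + b * a * c = a * (b * c) + b * (a * c) := by
  have h : (a * b * c + b * a * c) - (a * (b * c) + b * (a * c)) =
      ((a + b) * (a + b) * c - (a + b) * ((a + b) * c))
        - (a * a * c - a * (a * c)) - (b * b * c - b * (b * c)) := by
    simp only [add_mul, mul_add]; abel
  rw [alt1 (a + b) c, alt1 a c, alt1 b c] at h
  simp only [sub_self, sub_zero, zero_sub, neg_zero] at h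
  exact sub_eq_zero.mp h

/-- Linearized right alternative law. -/
lemma myLin2 (alt2 : ∀ x y : R, y * x * x = y * (x * x)) (y a b : R) :
    y * a * b + y * b * a = y * (a * b) + y * (b * a) := by
  have h : (y * a * b + y * b * a) - (y * (a * b) + y * (b * a)) =
      (y * (a + b) * (a + b) - y * ((a + b) * (a + b)))
        - (y * a * a - y * (a * a)) - (y * b * b - y * (b * b)) := by
    simp only [add_mul, mul_add]; abel
  rw [alt2 (a + b) y, alt2 a y, alt2 b y] at h
  simp only [sub_self, sub_zero, zero_sub, neg_zero] at h
  exact sub_eq_zero.mp h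

lemma lsq (alt1 : ∀ x y : R, x * x * y = x * (x * y)) {u : R} (hu : u * u = u) (z : R) :
    u * (u * z) = u * z := by rw [← alt1, hu]

lemma rsq (alt2 : ∀ x y : R, y * x * x = y * (x * x)) {u : R} (hu : u * u = u) (z : R) :
    z * u * u = z * u := by rw [alt2, hu]

lemma flexE (alt1 : ∀ x y : R, x * x * y = x * (x * y))
    (alt2 : ∀ x y : R, y * x * x = y * (x * x)) {u : R} (hu : u * u = u) (z : R) :
    u * z * u = u * (z * u) := by
  have l := myLin1 alt1 u z u
  rw [alt2, hu] at l
  exact add_right_cancel l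

lemma annL (alt1 : ∀ x y : R, x * x * y = x * (x * y)) {u : R} (hu : u * u = u) (z : R) :
    u * ((1 - u) * z) = 0 := by
  rw [sub_mul, one_mul, mul_sub, lsq alt1 hu, sub_self]

lemma annR (alt2 : ∀ x y : R, y * x * x = y * (x * x)) {u : R} (hu : u * u = u) (z : R) :
    z * (1 - u) * u = 0 := by
  rw [mul_sub, mul_one, sub_mul, rsq alt2 hu, sub_self]

lemma annR' (alt2 : ∀ x y : R, y * x * x = y * (x * x)) {u : R} (hu : u * u = u) (z : R) :
    z * u * (1 - u) = 0 := by
  rw [mul_sub, mul_one, rsq alt2 hu, sub_self]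

/-- The key computation: for `x` with `u x = x`, `x u = 0` and `c` commuting with `x`,
the diagonal part of `c` commutes with `x`. -/
lemma key_s11 (alt1 : ∀ x y : R, x * x * y = x * (x * y))
    (alt2 : ∀ x y : R, y * x * x = y * (x * x))
    (tor2 : ∀ x : R, (2 : ℕ) • x = 0 → x = 0)
    (u c x : R) (hu : u * u = u) (hx1 : u * x = x) (hx2 : x * u = 0)
    (hcx : c * x = x * c) :
    (u * (c * u) + (1 - u) * (c * (1 - u))) * x =
      x * (u * (c * u) + (1 - u) * (c * (1 - u))) := by
  set p := u * (c * u) with hp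
  set s := (1 - u) * (c * (1 - u)) with hs
  set q := (1 - u) * (c * u) with hq
  set r := u * (c * (1 - u)) with hr
  -- basic Peirce relations for p, q, r, s
  have hup : u * p = p := lsq alt1 hu _
  have hpu : p * u = p := by rw [hp, flexE alt1 alt2 hu, rsq alt2 hu]
  have huq : u * q = 0 := annL alt1 hu _
  have hqu : q * u = q := by rw [hq, sub_mul, one_mul, sub_mul, rsq alt2 hu, flexE alt1 alt2 hu,
    rsq alt2 hu]
  have hur : u * r = r := lsq alt1 hu _
  have hru : r * u = 0 := by rw [hr, flexE alt1 alt2 hu, annR alt2 hu, mul_zero]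
  have hus : u * s = 0 := annL alt1 hu _
  have hsu : s * u = 0 := by rw [hs, sub_mul, one_mul, sub_mul, annR alt2 hu, hru, sub_self]
  -- s * x = 0
  have hsx : s * x = 0 := by
    have l := myLin1 alt1 u s x
    rw [hus, hsu, zero_mul, hx1] at l
    have l' := l.symm
    rw [add_zero] at l'
    have h1 : u * (s * x) = -(s * x) := eq_neg_of_add_eq_zero_left l'
    have h2 := lsq alt1 hu (s * x)
    rw [h1, mul_neg, h1, neg_neg] at h2
    refine tor2 _ ?_
    rw [two_smul]
    nth_rewrite 2 [h2]
    exact add_neg_cancel _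
  -- x * p = 0
  have hxp : x * p = 0 := by
    have l := myLin2 alt2 x p u
    rw [hx2, zero_mul, hpu, hup, add_zero] at l
    have l2 := rsq alt2 hu (x * p)
    rw [l, add_mul, l] at l2
    have l2' : (x * p + x * p) + (x * p + x * p) = 0 + (x * p + x * p) := by
      rw [zero_add]; exact l2
    have l3 := add_right_cancel l2'
    exact tor2 _ (by rw [two_smul]; exact l3)
  -- components of p*x
  have hupx : u * (p * x) = p * x := by
    have l := myLin1 alt1 u p x
    rw [hup, hpu, hx1] at l
    exact (add_right_cancel l).symm
  have hpxu : p * x * u = 0 := by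
    have l := myLin2 alt2 p x u
    rw [hpu, hx2, mul_zero, hx1] at l
    exact add_right_cancel l
  -- components of q*x
  have huqx : u * (q * x) = 0 := by
    have l := myLin1 alt1 u q x
    rw [huq, zero_mul, hqu, hx1] at l
    exact (add_right_cancel l).symm
  have hqxu : q * x * u = 0 := by
    have l := myLin2 alt2 q x u
    rw [hqu, hx2, mul_zero, hx1] at l
    exact add_right_cancel l
  -- component of r*x
  have hrxu : r * x * u = r * x := by
    have l := myLin2 alt2 r x u
    rw [hru, zero_mul, hx2, mul_zero, hx1, add_zero, zero_add] at l
    exact l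
  -- component of x*q
  have hxqu : x * q * u = x * q := by
    have l := myLin2 alt2 x q u
    rw [hx2, zero_mul, hqu, huq, mul_zero, add_zero, add_zero] at l
    exact l
  -- component of x*r
  have hxru : x * r * u = x * r := by
    have l := myLin2 alt2 x r u
    rw [hx2, zero_mul, hru, mul_zero, hur, add_zero, zero_add] at l
    exact l
  -- components of x*s
  have hxsu : x * s * u = 0 := by
    have l := myLin2 alt2 x s u
    rw [hx2, zero_mul, hsu, hus, mul_zero, add_zero, add_zero] at l
    exact l
  have huxs : u * (x * s) = x * s := by
    have l := myLin1 alt1 u x s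
    rw [hx1, hx2, zero_mul, hus, mul_zero, add_zero, add_zero] at l
    exact l.symm
  -- decomposition of c
  have hc : p + q + r + s = c := by
    rw [hp, hq, hr, hs]
    simp only [sub_mul, one_mul, mul_sub, mul_one]
    abel
  have heq : p * x + q * x + r * x = x * q + x * r + x * s := by
    have hcx' := hcx
    rw [← hc, add_mul, add_mul, add_mul, mul_add, mul_add, mul_add, hsx, hxp, add_zero,
      zero_add] at hcx'
    exact hcx'
  -- extract the (i,j)-component:  p*x = x*s
  have e1 : u * (p * x + q * x + r * x) - u * ((p * x + q * x + r * x) * u) = p * x := by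
    simp only [add_mul, mul_add]
    rw [hpxu, hqxu, hrxu, hupx, huqx]
    simp only [mul_zero]
    abel
  have e2 : u * (x * q + x * r + x * s) - u * ((x * q + x * r + x * s) * u) = x * s := by
    simp only [add_mul, mul_add]
    rw [hxqu, hxru, hxsu, huxs]
    simp only [mul_zero]
    abel
  have hkey : p * x = x * s := by
    rw [← e1, heq]
    exact e2
  rw [add_mul, mul_add, hsx, hxp, add_zero, zero_add, hkey]

end AltAux

theorem stmt11 {R : Type*} [NonAssocRing R]
    (alt1 : ∀ x y : R, x * x * y = x * (x * y))
    (alt2 : ∀ x y : R, y * x * x = y * (x * x))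
    (tor2 : ∀ x : R, (2 : ℕ) • x = 0 → x = 0)
    (tor3 : ∀ x : R, (3 : ℕ) • x = 0 → x = 0)
    (e₁ : R) (he : e₁ * e₁ = e₁) (he0 : e₁ ≠ 0) (he1 : e₁ ≠ 1)
    (hd1 : ∀ x : R, (∀ r : R, x * r * e₁ = 0) → x = 0)
    (hd2 : ∀ x : R, (∀ r : R, x * r * (1 - e₁) = 0) → x = 0)
    (φ : R → R) (hadd : ∀ x y : R, φ (x + y) = φ x + φ y)
    (hcomm : ∀ x : R, φ x * x = x * φ x)
    :
    ∀ i j : Fin 2, i ≠ j → ∀ x ∈ peirceSet e₁ i j,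
      (peirceE e₁ i * (φ x * peirceE e₁ i) + peirceE e₁ j * (φ x * peirceE e₁ j)) * x =
        x * (peirceE e₁ i * (φ x * peirceE e₁ i) + peirceE e₁ j * (φ x * peirceE e₁ j))
    := by
  have pe0 : peirceE (R := R) e₁ 0 = e₁ := rfl
  have pe1 : peirceE (R := R) e₁ 1 = 1 - e₁ := rfl
  intro i j hij x hx
  have hcase : (i = 0 ∧ j = 1) ∨ (i = 1 ∧ j = 0) := by
    fin_cases i <;> fin_cases j
    · exact absurd rfl hij
    · exact Or.inl ⟨rfl, rfl⟩
    · exact Or.inr ⟨rfl, rfl⟩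
    · exact absurd rfl hij
  rcases hcase with ⟨hi, hj⟩ | ⟨hi, hj⟩ <;> subst hi <;> subst hj
  · -- i = 0, j = 1
    obtain ⟨a, ha⟩ := hx
    rw [pe0, pe1] at ha ⊢
    have hx1 : e₁ * x = x := by rw [ha, ← alt1, he]
    have hx2 : x * e₁ = 0 := by
      rw [ha, flexE alt1 alt2 he, annR alt2 he, mul_zero]
    exact key_s11 alt1 alt2 tor2 e₁ (φ x) x he hx1 hx2 (hcomm x)
  · -- i = 1, j = 0
    obtain ⟨a, ha⟩ := hx
    rw [pe0, pe1] at ha ⊢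
    have hu' : (1 - e₁) * (1 - e₁) = 1 - e₁ := by
      rw [mul_sub, mul_one, sub_mul, one_mul, he]; abel
    have hsub : (1 : R) - (1 - e₁) = e₁ := sub_sub_cancel 1 e₁
    have hx1 : (1 - e₁) * x = x := by rw [ha, ← alt1, hu']
    have hx2 : x * (1 - e₁) = 0 := by
      rw [ha, flexE alt1 alt2 hu', annR' alt2 he, mul_zero]
    have hk := key_s11 alt1 alt2 tor2 (1 - e₁) (φ x) x hu' hx1 hx2 (hcomm x)
    rw [hsub] at hk
    exact hk
end

section
/- Let R be a unital 2- and 3-torsion free alternative ring with a nontrivial idempotent e_1, e_2 = 1 − e_1, satisfying: for each i ∈ {1,2}, if x ∈ R has (x r)e_i = 0 for all r ∈ R, then x = 0. Let φ : R → R be an additive commuting map. Then for all i ≠ j in {1,2} and every x_ij ∈ R_ij there exist z, z' ∈ Z(R) such that e_i φ(x_ij) e_i = z e_i and e_j φ(x_ij) e_j = z' e_j. -/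
set_option linter.unusedSectionVars false
set_option linter.unusedVariables false
set_option maxHeartbeats 1000000

namespace AltProof
variable {R : Type*} [NonAssocRing R]

def asc (a b c : R) : R := a * b * c - a * (b * c)

section
variable (alt1 : ∀ x y : R, x * x * y = x * (x * y))
variable (alt2 : ∀ x y : R, y * x * x = y * (x * x))
variable (tor2 : ∀ x : R, (2 : ℕ) • x = 0 → x = 0)

include alt1 alt2 tor2
omit alt1 alt2 tor2 in
lemma teich (w x y z : R) :
    asc (w*x) y z - asc w (x*y) z + asc w x (y*z) = w * asc x y z + asc w x y * z := by
  simp only [asc, mul_sub, sub_mul]; abel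
omit alt2 tor2 in
lemma ascL (a b : R) : asc a a b = 0 := by simp [asc, alt1]
omit alt1 tor2 in
lemma ascR (a b : R) : asc a b b = 0 := by simp [asc, alt2]
omit alt2 tor2 in
lemma swap12 (a b c : R) : asc a b c = - asc b a c := by
  have h := alt1 (a+b) c
  simp only [add_mul, mul_add, alt1] at h
  rw [← sub_eq_zero] at h ⊢
  simp only [asc]
  abel_nf at h ⊢
  exact h
omit alt1 tor2 in
lemma swap23 (a b c : R) : asc a b c = - asc a c b := by
  have h := alt2 (b+c) a
  simp only [add_mul, mul_add, alt2] at h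
  rw [← sub_eq_zero] at h ⊢
  simp only [asc]
  abel_nf at h ⊢
  exact h
omit tor2 in
lemma cyc (a b c : R) : asc a b c = asc b c a := by
  rw [swap12 alt1, swap23 alt2 b a c, neg_neg]
omit tor2 in
lemma flex (a b : R) : asc a b a = 0 := by
  rw [cyc alt1 alt2, ascR alt2]
omit alt1 alt2 in
lemma half (x : R) (h : x + x = 0) : x = 0 := tor2 x (by rwa [two_nsmul])

lemma keyL2 (a b c : R) : asc a (b*a) c = a * asc a b c := by
  have t1 := teich a a b c
  have t2 := teich b a a c
  have t3 := teich a b a c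
  rw [ascL alt1, ascL alt1, zero_mul] at t1
  rw [swap12 alt1 (b*a) a c, swap12 alt1 b (a*a) c, swap12 alt1 b a (a*c),
      ascL alt1, mul_zero, ascR alt2 b a, zero_mul] at t2
  rw [swap12 alt1 (a*b) a c, swap12 alt1 b a c, mul_neg, flex alt1 alt2 a b,
      zero_mul] at t3
  have h2 : (asc a (b*a) c - a * asc a b c) + (asc a (b*a) c - a * asc a b c) = 0 := by
    linear_combination (norm := abel1) t1 - t2 - t3
  have h3 := half tor2 _ h2
  linear_combination (norm := abel1) h3

lemma keyR2 (a b c : R) : asc c (a*b) a + asc c a b * a = 0 := by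
  have u1 := teich c a b a
  have u2 := teich c b a a
  have u3 := teich c a a b
  rw [flex alt1 alt2, mul_zero] at u1
  rw [ascR alt2 (c*b) a, swap23 alt2 c (b*a) a, ascR alt2 b a, mul_zero,
      swap23 alt2 c b a, neg_mul] at u2
  rw [swap23 alt2 (c*a) a b, swap23 alt2 c (a*a) b, swap23 alt2 c a (a*b),
      ascL alt1, mul_zero, ascR alt2 c a, zero_mul] at u3
  have h2 : (asc c (a*b) a + asc c a b * a) + (asc c (a*b) a + asc c a b * a) = 0 := by
    linear_combination (norm := abel1) u2 - u1 - u3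
  exact half tor2 _ h2

lemma rMouf (c a b : R) : ((c*a)*b)*a = c*((a*b)*a) := by
  have u1 := teich c a b a
  rw [flex alt1 alt2, mul_zero] at u1
  have k := keyR2 alt1 alt2 tor2 a b c
  have hx : (a*b)*a = a*(b*a) := by
    have h := flex alt1 alt2 a b
    simp only [asc] at h
    linear_combination (norm := abel1) h
  have hc : c*((a*b)*a) = c*(a*(b*a)) := congrArg (c * ·) hx
  simp only [asc, sub_mul] at u1 k
  linear_combination (norm := abel1) u1 + k - hc

lemma mMouf (a b c : R) : (a*b)*(c*a) = a*((b*c)*a) := by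
  have k := keyL2 alt1 alt2 tor2 a c b
  have hs := swap23 alt2 a b (c*a)
  have hm : a * asc a c b = -(a * asc b c a) := by
    rw [swap12 alt1 a c b, cyc alt1 alt2 b c a, mul_neg]
  have key : asc a b (c*a) = a * asc b c a := by
    rw [hs, k, hm, neg_neg]
  simp only [asc, mul_sub] at key
  linear_combination (norm := abel1) key

lemma rMouf' (c a d b : R) :
    ((c*a)*b)*d + ((c*d)*b)*a = c*((a*b)*d) + c*((d*b)*a) := by
  have h := rMouf alt1 alt2 tor2 c (a+d) b
  simp only [mul_add, add_mul] at h
  linear_combination (norm := abel1) h - rMouf alt1 alt2 tor2 c a b - rMouf alt1 alt2 tor2 c d b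

lemma mMouf' (a b c d : R) :
    (a*b)*(c*d) + (d*b)*(c*a) = a*((b*c)*d) + d*((b*c)*a) := by
  have h := mMouf alt1 alt2 tor2 (a+d) b c
  simp only [mul_add, add_mul] at h
  linear_combination (norm := abel1) h - mMouf alt1 alt2 tor2 a b c - mMouf alt1 alt2 tor2 d b c

omit alt2 tor2 in
lemma eMul (e u v : R) : e*(u*v) = (e*u)*v + (u*e)*v - u*(e*v) := by
  have h := swap12 alt1 e u v
  simp only [asc] at h
  linear_combination (norm := abel1) -h

omit alt1 tor2 in
lemma mulE (e u v : R) : (u*v)*e = u*(v*e) - (u*e)*v + u*(e*v) := by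
  have h := swap23 alt2 u v e
  simp only [asc] at h
  linear_combination (norm := abel1) h

end

lemma master {R : Type*} [NonAssocRing R]
    (alt1 : ∀ x y : R, x * x * y = x * (x * y))
    (alt2 : ∀ x y : R, y * x * x = y * (x * x))
    (tor2 : ∀ x : R, (2 : ℕ) • x = 0 → x = 0)
    (e : R) (he : e * e = e)
    (hd : ∀ t : R, (∀ r : R, t * r * e = 0) → t = 0)
    (φ : R → R) (hadd : ∀ u v : R, φ (u + v) = φ u + φ v)
    (hcomm : ∀ u : R, φ u * u = u * φ u)
    (x : R) (hx1 : e * x = x) (hx2 : x * e = 0) :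
    ∃ z : R, (∀ r : R, z * r = r * z) ∧
      e * (φ x * e) = z * e ∧ (1 - e) * (φ x * (1 - e)) = z * (1 - e) := by
  have eec : ∀ t : R, e*(e*t) = e*t := fun t => by rw [← alt1, he]
  have cee : ∀ t : R, (t*e)*e = t*e := fun t => by rw [alt2, he]
  have flexe : ∀ t : R, (e*t)*e = e*(t*e) := fun t => by
    have h := flex alt1 alt2 e t
    simp only [asc] at h
    linear_combination (norm := abel1) h
  -- zero product rules
  have z1211 : ∀ y u : R, e*y = y → y*e = 0 → e*u = u → u*e = u → y*u = 0 := by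
    intro y u hy1 hy2 hu1 hu2
    have h1 : (y*u)*e = y*u + y*u := by
      rw [mulE alt2, hy2, hu2, hu1]
      try simp only [zero_mul, mul_zero]
      abel
    have h2 := cee (y*u)
    rw [h1, add_mul, h1] at h2
    exact half tor2 _ (by linear_combination (norm := abel1) h2)
  have z2122 : ∀ w p : R, e*w = 0 → w*e = w → e*p = 0 → p*e = 0 → w*p = 0 := by
    intro w p hw1 hw2 hp1 hp2
    have h1 : (w*p)*e = -(w*p) := by
      rw [mulE alt2, hp2, hw2, hp1]
      try simp only [zero_mul, mul_zero]
      abel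
    have h2 := cee (w*p)
    rw [h1, neg_mul, h1, neg_neg] at h2
    exact half tor2 _ (by linear_combination (norm := abel1) h2)
  have z1121 : ∀ u w : R, e*u = u → u*e = u → e*w = 0 → w*e = w → u*w = 0 := by
    intro u w hu1 hu2 hw1 hw2
    have h1 : e*(u*w) = u*w + u*w := by
      rw [eMul alt1, hu1, hu2, hw1]
      try simp only [zero_mul, mul_zero]
      abel
    have h2 := eec (u*w)
    rw [h1, mul_add, h1] at h2
    exact half tor2 _ (by linear_combination (norm := abel1) h2)
  have z2212 : ∀ p y : R, e*p = 0 → p*e = 0 → e*y = y → y*e = 0 → p*y = 0 := by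
    intro p y hp1 hp2 hy1 hy2
    have h1 : e*(p*y) = -(p*y) := by
      rw [eMul alt1, hp1, hp2, hy1]
      try simp only [zero_mul, mul_zero]
      abel
    have h2 := eec (p*y)
    rw [h1, mul_neg, h1, neg_neg] at h2
    exact half tor2 _ (by linear_combination (norm := abel1) h2)
  have z2211 : ∀ p u : R, e*p = 0 → p*e = 0 → e*u = u → u*e = u → p*u = 0 := by
    intro p u hp1 hp2 hu1 hu2
    have h1 : e*(p*u) = -(p*u) := by
      rw [eMul alt1, hp1, hp2, hu1]
      try simp only [zero_mul, mul_zero]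
      abel
    have h2 := eec (p*u)
    rw [h1, mul_neg, h1, neg_neg] at h2
    exact half tor2 _ (by linear_combination (norm := abel1) h2)
  have z1122 : ∀ u p : R, e*u = u → u*e = u → e*p = 0 → p*e = 0 → u*p = 0 := by
    intro u p hu1 hu2 hp1 hp2
    have h1 : e*(u*p) = u*p + u*p := by
      rw [eMul alt1, hu1, hu2, hp1]
      try simp only [zero_mul, mul_zero]
      abel
    have h2 := eec (u*p)
    rw [h1, mul_add, h1] at h2
    exact half tor2 _ (by linear_combination (norm := abel1) h2)
  -- component rules
  have m1112l : ∀ u y : R, e*u = u → u*e = u → e*y = y → y*e = 0 → e*(u*y) = u*y := by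
    intro u y hu1 hu2 hy1 hy2; rw [eMul alt1, hu1, hu2, hy1]; try simp only [zero_mul, mul_zero]
    abel
  have m1112r : ∀ u y : R, e*u = u → u*e = u → e*y = y → y*e = 0 → (u*y)*e = 0 := by
    intro u y hu1 hu2 hy1 hy2; rw [mulE alt2, hy2, hu2, hy1]; try simp only [zero_mul, mul_zero]
    abel
  have m1222l : ∀ y p : R, e*y = y → y*e = 0 → e*p = 0 → p*e = 0 → e*(y*p) = y*p := by
    intro y p hy1 hy2 hp1 hp2; rw [eMul alt1, hy1, hy2, hp1]; try simp only [zero_mul, mul_zero]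
    abel
  have m1222r : ∀ y p : R, e*y = y → y*e = 0 → e*p = 0 → p*e = 0 → (y*p)*e = 0 := by
    intro y p hy1 hy2 hp1 hp2; rw [mulE alt2, hp2, hy2, hp1]; try simp only [zero_mul, mul_zero]
    abel
  have m1221l : ∀ y w : R, e*y = y → y*e = 0 → e*w = 0 → w*e = w → e*(y*w) = y*w := by
    intro y w hy1 hy2 hw1 hw2; rw [eMul alt1, hy1, hy2, hw1]; try simp only [zero_mul, mul_zero]
    abel
  have m1221r : ∀ y w : R, e*y = y → y*e = 0 → e*w = 0 → w*e = w → (y*w)*e = y*w := by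
    intro y w hy1 hy2 hw1 hw2; rw [mulE alt2, hw2, hy2, hw1]; try simp only [zero_mul, mul_zero]
    abel
  have m2112l : ∀ w y : R, e*w = 0 → w*e = w → e*y = y → y*e = 0 → e*(w*y) = 0 := by
    intro w y hw1 hw2 hy1 hy2; rw [eMul alt1, hw1, hw2, hy1]; try simp only [zero_mul, mul_zero]
    abel
  have m2112r : ∀ w y : R, e*w = 0 → w*e = w → e*y = y → y*e = 0 → (w*y)*e = 0 := by
    intro w y hw1 hw2 hy1 hy2; rw [mulE alt2, hy2, hw2, hy1]; try simp only [zero_mul, mul_zero]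
    abel
  have m1212l : ∀ y y' : R, e*y = y → y*e = 0 → e*y' = y' → y'*e = 0 → e*(y*y') = 0 := by
    intro y y' hy1 hy2 hy'1 hy'2; rw [eMul alt1, hy1, hy2, hy'1]; try simp only [zero_mul, mul_zero]
    abel
  have m1212r : ∀ y y' : R, e*y = y → y*e = 0 → e*y' = y' → y'*e = 0 → (y*y')*e = y*y' := by
    intro y y' hy1 hy2 hy'1 hy'2; rw [mulE alt2, hy'2, hy2, hy'1]; try simp only [zero_mul, mul_zero]
    abel
  have m2221l : ∀ p w : R, e*p = 0 → p*e = 0 → e*w = 0 → w*e = w → e*(p*w) = 0 := by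
    intro p w hp1 hp2 hw1 hw2; rw [eMul alt1, hp1, hp2, hw1]; try simp only [zero_mul, mul_zero]
    abel
  have m2221r : ∀ p w : R, e*p = 0 → p*e = 0 → e*w = 0 → w*e = w → (p*w)*e = p*w := by
    intro p w hp1 hp2 hw1 hw2; rw [mulE alt2, hw2, hp2, hw1]; try simp only [zero_mul, mul_zero]
    abel
  have m2111l : ∀ w u : R, e*w = 0 → w*e = w → e*u = u → u*e = u → e*(w*u) = 0 := by
    intro w u hw1 hw2 hu1 hu2; rw [eMul alt1, hw1, hw2, hu1]; try simp only [zero_mul, mul_zero]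
    abel
  have m2111r : ∀ w u : R, e*w = 0 → w*e = w → e*u = u → u*e = u → (w*u)*e = w*u := by
    intro w u hw1 hw2 hu1 hu2; rw [mulE alt2, hu2, hw2, hu1]; try simp only [zero_mul, mul_zero]
    abel
  have m1111l : ∀ u v : R, e*u = u → u*e = u → e*v = v → v*e = v → e*(u*v) = u*v := by
    intro u v hu1 hu2 hv1 hv2; rw [eMul alt1, hu1, hu2, hv1]; try simp only [zero_mul, mul_zero]
    abel
  have m1111r : ∀ u v : R, e*u = u → u*e = u → e*v = v → v*e = v → (u*v)*e = u*v := by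
    intro u v hu1 hu2 hv1 hv2; rw [mulE alt2, hv2, hu2, hv1]; try simp only [zero_mul, mul_zero]
    abel
  have m2222l : ∀ p q : R, e*p = 0 → p*e = 0 → e*q = 0 → q*e = 0 → e*(p*q) = 0 := by
    intro p q hp1 hp2 hq1 hq2; rw [eMul alt1, hp1, hp2, hq1]; try simp only [zero_mul, mul_zero]
    abel
  have m2222r : ∀ p q : R, e*p = 0 → p*e = 0 → e*q = 0 → q*e = 0 → (p*q)*e = 0 := by
    intro p q hp1 hp2 hq1 hq2; rw [mulE alt2, hq2, hp2, hq1]; try simp only [zero_mul, mul_zero]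
    abel
  -- decomposition
  have comp11l : ∀ t : R, e*(e*(t*e)) = e*(t*e) := fun t => eec _
  have comp11r : ∀ t : R, (e*(t*e))*e = e*(t*e) := fun t => by rw [flexe, cee]
  have comp12l : ∀ t : R, e*(e*t - e*(t*e)) = e*t - e*(t*e) := fun t => by
    rw [mul_sub, eec, eec]
  have comp12r : ∀ t : R, (e*t - e*(t*e))*e = 0 := fun t => by
    rw [sub_mul, flexe, flexe, cee, sub_self]
  have comp21l : ∀ t : R, e*(t*e - e*(t*e)) = 0 := fun t => by
    rw [mul_sub, eec, sub_self]
  have comp21r : ∀ t : R, (t*e - e*(t*e))*e = t*e - e*(t*e) := fun t => by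
    rw [sub_mul, cee, flexe, cee]
  have comp22l : ∀ t : R, e*(t - e*t - t*e + e*(t*e)) = 0 := fun t => by
    simp only [mul_add, mul_sub]
    rw [eec, eec]; abel
  have comp22r : ∀ t : R, (t - e*t - t*e + e*(t*e))*e = 0 := fun t => by
    simp only [add_mul, sub_mul]
    rw [flexe, cee, flexe, cee]; abel
  have split4 : ∀ r : R, ∃ r1 r2 r3 r4 : R, r = r1+r2+r3+r4 ∧ e*r1 = r1 ∧ r1*e = r1
      ∧ e*r2 = r2 ∧ r2*e = 0 ∧ e*r3 = 0 ∧ r3*e = r3 ∧ e*r4 = 0 ∧ r4*e = 0 :=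
    fun r => ⟨e*(r*e), e*r - e*(r*e), r*e - e*(r*e), r - e*r - r*e + e*(r*e),
      by abel, comp11l r, comp11r r, comp12l r, comp12r r, comp21l r, comp21r r,
      comp22l r, comp22r r⟩
  -- linearized commuting
  have lincomm : ∀ u v : R, φ u * v + φ v * u = u * φ v + v * φ u := by
    intro u v
    have h := hcomm (u+v)
    rw [hadd] at h
    simp only [add_mul, mul_add] at h
    linear_combination (norm := abel1) h - hcomm u - hcomm v
  -- φ e is diagonal
  have hBe := hcomm e
  obtain ⟨U, P, hUP, hU1, hU2, hP1, hP2⟩ :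
      ∃ U P : R, φ e = U + P ∧ e*U = U ∧ U*e = U ∧ e*P = 0 ∧ P*e = 0 := by
    refine ⟨e*φ e, φ e - e*φ e, by abel, eec _, ?_, ?_, ?_⟩
    · rw [flexe, hBe, eec]
    · rw [mul_sub, eec, sub_self]
    · rw [sub_mul, flexe, hBe, eec, sub_self]
  -- step 3 : off-diagonal 21-component of φ x vanishes
  have ha21 : φ x * e = e * (φ x * e) := by
    have E := lincomm x e
    rw [hUP] at E
    simp only [add_mul, mul_add] at E
    rw [z1211 x U hx1 hx2 hU1 hU2, z2212 P x hP1 hP2 hx1 hx2] at E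
    have E2 := congrArg (fun t : R => e * t) E
    simp only [mul_add, mul_zero] at E2
    rw [m1222l x P hx1 hx2 hP1 hP2, m1112l U x hU1 hU2 hx1 hx2, eec] at E2
    linear_combination (norm := abel1) E - E2
  -- components of a = φ x
  obtain ⟨A1, A2, A4, hA1def, hsplita, hA1l, hA1r, hA2l, hA2r, hA4l, hA4r⟩ :
      ∃ A1 A2 A4 : R, A1 = e*(φ x*e) ∧ φ x = A1 + A2 + A4 ∧ e*A1 = A1 ∧ A1*e = A1
        ∧ e*A2 = A2 ∧ A2*e = 0 ∧ e*A4 = 0 ∧ A4*e = 0 := by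
    refine ⟨e*(φ x*e), e*(φ x) - e*(φ x*e), φ x - e*(φ x) - φ x*e + e*(φ x*e),
      rfl, ?_, comp11l _, comp11r _, comp12l _, comp12r _, comp22l _, comp22r _⟩
    linear_combination (norm := abel1) ha21
  -- diagonal structure of φ u for u in R11
  have diag11 : ∀ u : R, e*u = u → u*e = u →
      φ u * e = e*(φ u * e) ∧ e * φ u = e*(φ u * e) := by
    intro u hu1 hu2
    have E := lincomm u e
    rw [hUP] at E
    simp only [add_mul, mul_add] at E
    rw [z2211 P u hP1 hP2 hu1 hu2, z1122 u P hu1 hu2 hP1 hP2] at E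
    have P1 := congrArg (fun t : R => t * e) E
    simp only [add_mul, zero_mul] at P1
    rw [cee, m1111r U u hU1 hU2 hu1 hu2, m1111r u U hu1 hu2 hU1 hU2, flexe] at P1
    have P2 := congrArg (fun t : R => e * t) E
    simp only [mul_add, mul_zero] at P2
    rw [m1111l U u hU1 hU2 hu1 hu2, m1111l u U hu1 hu2 hU1 hU2, eec] at P2
    constructor
    · linear_combination (norm := abel1) E - P2
    · linear_combination (norm := abel1) P1 - E
  have diag22 : ∀ p : R, e*p = 0 → p*e = 0 →
      φ p * e = e*(φ p * e) ∧ e * φ p = e*(φ p * e) := by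
    intro p hp1 hp2
    have E := lincomm p e
    rw [hUP] at E
    simp only [add_mul, mul_add] at E
    rw [z1122 U p hU1 hU2 hp1 hp2, z2211 p U hp1 hp2 hU1 hU2] at E
    have P1 := congrArg (fun t : R => t * e) E
    simp only [add_mul, zero_mul] at P1
    rw [cee, m2222r P p hP1 hP2 hp1 hp2, m2222r p P hp1 hp2 hP1 hP2, flexe] at P1
    have P2 := congrArg (fun t : R => e * t) E
    simp only [mul_add, mul_zero] at P2
    rw [m2222l P p hP1 hP2 hp1 hp2, m2222l p P hp1 hp2 hP1 hP2, eec] at P2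
    constructor
    · linear_combination (norm := abel1) P1
    · linear_combination (norm := abel1) -P2
  have offdiag21 : ∀ w : R, e*w = 0 → w*e = w → e * φ w = e*(φ w * e) := by
    intro w hw1 hw2
    have E := lincomm w e
    rw [hUP] at E
    simp only [add_mul, mul_add] at E
    rw [z1121 U w hU1 hU2 hw1 hw2, z2122 w P hw1 hw2 hP1 hP2] at E
    have P2 := congrArg (fun t : R => e * t) E
    simp only [mul_add, mul_zero] at P2
    rw [m2221l P w hP1 hP2 hw1 hw2, m2111l w U hw1 hw2 hU1 hU2, eec] at P2
    linear_combination (norm := abel1) -P2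
  -- C1
  have hC1 : ∀ u : R, e*u = u → u*e = u → A1*u = u*A1 := by
    intro u hu1 hu2
    obtain ⟨hc1, hc2⟩ := diag11 u hu1 hu2
    obtain ⟨C1, C4, hCsplit, hC1l, hC1r, hC4l, hC4r⟩ :
        ∃ C1 C4 : R, φ u = C1 + C4 ∧ e*C1 = C1 ∧ C1*e = C1 ∧ e*C4 = 0 ∧ C4*e = 0 := by
      refine ⟨e*(φ u*e), φ u - e*(φ u*e), by abel, eec _, comp11r _, ?_, ?_⟩
      · rw [mul_sub, eec, ← hc2, sub_self]
      · rw [sub_mul, comp11r, ← hc1, sub_self]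
    have E := lincomm x u
    rw [hsplita, hCsplit] at E
    simp only [add_mul, mul_add] at E
    rw [z1211 A2 u hA2l hA2r hu1 hu2, z2211 A4 u hA4l hA4r hu1 hu2,
        z2212 C4 x hC4l hC4r hx1 hx2, z1211 x C1 hx1 hx2 hC1l hC1r,
        z1122 u A4 hu1 hu2 hA4l hA4r] at E
    have P2 := congrArg (fun t : R => e*(t*e)) E
    simp only [add_mul, mul_add, zero_mul, mul_zero, add_zero, zero_add] at P2
    rw [m1111r A1 u hA1l hA1r hu1 hu2, m1111l A1 u hA1l hA1r hu1 hu2,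
        m1112r C1 x hC1l hC1r hx1 hx2, mul_zero,
        m1222r x C4 hx1 hx2 hC4l hC4r, mul_zero,
        m1111r u A1 hu1 hu2 hA1l hA1r, m1111l u A1 hu1 hu2 hA1l hA1r,
        m1112r u A2 hu1 hu2 hA2l hA2r, mul_zero] at P2
    linear_combination (norm := abel1) P2
  -- C2
  have hC2 : ∀ p : R, e*p = 0 → p*e = 0 → A4*p = p*A4 := by
    intro p hp1 hp2
    obtain ⟨hc1, hc2⟩ := diag22 p hp1 hp2
    obtain ⟨C1, C4, hCsplit, hC1l, hC1r, hC4l, hC4r⟩ :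
        ∃ C1 C4 : R, φ p = C1 + C4 ∧ e*C1 = C1 ∧ C1*e = C1 ∧ e*C4 = 0 ∧ C4*e = 0 := by
      refine ⟨e*(φ p*e), φ p - e*(φ p*e), by abel, eec _, comp11r _, ?_, ?_⟩
      · rw [mul_sub, eec, ← hc2, sub_self]
      · rw [sub_mul, comp11r, ← hc1, sub_self]
    have E := lincomm x p
    rw [hsplita, hCsplit] at E
    simp only [add_mul, mul_add] at E
    rw [z1122 A1 p hA1l hA1r hp1 hp2, z2212 C4 x hC4l hC4r hx1 hx2,
        z1211 x C1 hx1 hx2 hC1l hC1r, z2211 p A1 hp1 hp2 hA1l hA1r,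
        z2212 p A2 hp1 hp2 hA2l hA2r] at E
    have P1 := congrArg (fun t : R => t * e) E
    simp only [add_mul, zero_mul, zero_add, add_zero] at P1
    rw [m1222r A2 p hA2l hA2r hp1 hp2, m2222r A4 p hA4l hA4r hp1 hp2,
        m1112r C1 x hC1l hC1r hx1 hx2, m1222r x C4 hx1 hx2 hC4l hC4r,
        m2222r p A4 hp1 hp2 hA4l hA4r] at P1
    have P3 := congrArg (fun t : R => e * t) E
    simp only [mul_add, mul_zero, zero_add, add_zero] at P3
    rw [m1222l A2 p hA2l hA2r hp1 hp2, m2222l A4 p hA4l hA4r hp1 hp2,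
        m1112l C1 x hC1l hC1r hx1 hx2, m1222l x C4 hx1 hx2 hC4l hC4r,
        m2222l p A4 hp1 hp2 hA4l hA4r] at P3
    have P2 := congrArg (fun t : R => e*(t*e)) E
    simp only [add_mul, mul_add, zero_mul, mul_zero, add_zero, zero_add] at P2
    rw [m1222r A2 p hA2l hA2r hp1 hp2, mul_zero, m2222r A4 p hA4l hA4r hp1 hp2, mul_zero,
        m1112r C1 x hC1l hC1r hx1 hx2, mul_zero, m1222r x C4 hx1 hx2 hC4l hC4r, mul_zero,
        m2222r p A4 hp1 hp2 hA4l hA4r, mul_zero] at P2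
    linear_combination (norm := abel1) E - P1 - P3 + P2
  -- K
  have hK : ∀ w : R, e*w = 0 → w*e = w → A4*w = w*A1 := by
    intro w hw1 hw2
    have hc12 := offdiag21 w hw1 hw2
    obtain ⟨C1, C3, C4, hCsplit, hC1l, hC1r, hC3l, hC3r, hC4l, hC4r⟩ :
        ∃ C1 C3 C4 : R, φ w = C1 + C3 + C4 ∧ e*C1 = C1 ∧ C1*e = C1 ∧ e*C3 = 0 ∧ C3*e = C3
          ∧ e*C4 = 0 ∧ C4*e = 0 := by
      refine ⟨e*(φ w*e), φ w*e - e*(φ w*e), φ w - e*(φ w) - φ w*e + e*(φ w*e),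
        ?_, comp11l _, comp11r _, comp21l _, comp21r _, comp22l _, comp22r _⟩
      linear_combination (norm := abel1) hc12
    have E := lincomm x w
    rw [hsplita, hCsplit] at E
    simp only [add_mul, mul_add] at E
    rw [z1121 A1 w hA1l hA1r hw1 hw2, z2212 C4 x hC4l hC4r hx1 hx2,
        z1211 x C1 hx1 hx2 hC1l hC1r, z2122 w A4 hw1 hw2 hA4l hA4r] at E
    have P1 := congrArg (fun t : R => t * e) E
    simp only [add_mul, zero_mul, zero_add, add_zero] at P1
    rw [m1221r A2 w hA2l hA2r hw1 hw2, m2221r A4 w hA4l hA4r hw1 hw2,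
        m1112r C1 x hC1l hC1r hx1 hx2,
        m2112r C3 x hC3l hC3r hx1 hx2, m1221r x C3 hx1 hx2 hC3l hC3r,
        m1222r x C4 hx1 hx2 hC4l hC4r, m2111r w A1 hw1 hw2 hA1l hA1r,
        m2112r w A2 hw1 hw2 hA2l hA2r] at P1
    have P2 := congrArg (fun t : R => e*(t*e)) E
    simp only [add_mul, mul_add, zero_mul, mul_zero, add_zero, zero_add] at P2
    rw [m1221r A2 w hA2l hA2r hw1 hw2, m1221l A2 w hA2l hA2r hw1 hw2,
        m2221r A4 w hA4l hA4r hw1 hw2, m2221l A4 w hA4l hA4r hw1 hw2,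
        m1112r C1 x hC1l hC1r hx1 hx2, mul_zero,
        m2112r C3 x hC3l hC3r hx1 hx2, mul_zero,
        m1221r x C3 hx1 hx2 hC3l hC3r, m1221l x C3 hx1 hx2 hC3l hC3r,
        m1222r x C4 hx1 hx2 hC4l hC4r, mul_zero,
        m2111r w A1 hw1 hw2 hA1l hA1r, m2111l w A1 hw1 hw2 hA1l hA1r,
        m2112r w A2 hw1 hw2 hA2l hA2r, mul_zero] at P2
    linear_combination (norm := abel1) P1 - P2
  -- squares in R12 vanish
  have sq12 : ∀ y : R, e*y = y → y*e = 0 → y*y = 0 := by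
    intro y hy1 hy2
    have h1 := ascR alt2 e y
    have h2 := swap12 alt1 e y y
    rw [h1] at h2
    have h3 : asc y e y = -(y*y) := by
      simp only [asc]; rw [hy2, hy1, zero_mul]; abel
    rw [h3, neg_neg] at h2
    exact h2.symm
  have anti12 : ∀ y y' : R, e*y = y → y*e = 0 → e*y' = y' → y'*e = 0 →
      y*y' + y'*y = 0 := by
    intro y y' hy1 hy2 hy'1 hy'2
    have h := sq12 (y+y') (by rw [mul_add, hy1, hy'1]) (by rw [add_mul, hy2, hy'2, add_zero])
    simp only [add_mul, mul_add] at h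
    rw [sq12 y hy1 hy2, sq12 y' hy'1 hy'2] at h
    linear_combination (norm := abel1) h
  -- associator lemmas
  have AL1 : ∀ u y w : R, e*u = u → u*e = u → e*y = y → y*e = 0 → e*w = 0 → w*e = w →
      (u*y)*w = u*(y*w) := by
    intro u y w hu1 hu2 hy1 hy2 hw1 hw2
    have h := rMouf' alt1 alt2 tor2 u e w y
    rw [hu2, hy1, z1121 u w hu1 hu2 hw1 hw2, zero_mul, zero_mul,
        m2112r w y hw1 hw2 hy1 hy2, mul_zero] at h
    linear_combination (norm := abel1) h
  have AL5 : ∀ y w u : R, e*u = u → u*e = u → e*y = y → y*e = 0 → e*w = 0 → w*e = w →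
      (y*w)*u = y*(w*u) := by
    intro y w u hu1 hu2 hy1 hy2 hw1 hw2
    have h0 : asc u y w = 0 := by
      have h := AL1 u y w hu1 hu2 hy1 hy2 hw1 hw2
      simp only [asc]
      linear_combination (norm := abel1) h
    have h1 : asc y w u = 0 := by
      rw [cyc alt1 alt2 y w u, cyc alt1 alt2 w u y]
      exact h0
    simp only [asc] at h1
    linear_combination (norm := abel1) h1
  have AL2 : ∀ y p w : R, e*y = y → y*e = 0 → e*p = 0 → p*e = 0 → e*w = 0 → w*e = w →
      (y*p)*w = y*(p*w) := by
    intro y p w hy1 hy2 hp1 hp2 hw1 hw2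
    have h := rMouf' alt1 alt2 tor2 y (1-e) w p
    rw [show y*(1-e) = y by rw [mul_sub, mul_one, hy2, sub_zero],
        show (1-e)*p = p by rw [sub_mul, one_mul, hp1, sub_zero],
        z1122 (y*w) p (m1221l y w hy1 hy2 hw1 hw2) (m1221r y w hy1 hy2 hw1 hw2) hp1 hp2,
        zero_mul, z2122 w p hw1 hw2 hp1 hp2, zero_mul, mul_zero] at h
    linear_combination (norm := abel1) h
  have AL3 : ∀ u y y' : R, e*u = u → u*e = u → e*y = y → y*e = 0 → e*y' = y' → y'*e = 0 →
      (u*y)*y' = (y*y')*u := by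
    intro u y y' hu1 hu2 hy1 hy2 hy'1 hy'2
    have h := mMouf' alt1 alt2 tor2 u y y' (1-e)
    rw [show y'*(1-e) = y' by rw [mul_sub, mul_one, hy'2, sub_zero],
        show (1-e)*y = 0 by rw [sub_mul, one_mul, hy1, sub_self],
        zero_mul,
        show (y*y')*(1-e) = 0 by
          rw [mul_sub, mul_one, m1212r y y' hy1 hy2 hy'1 hy'2, sub_self],
        mul_zero,
        show (1-e)*((y*y')*u) = (y*y')*u by
          rw [sub_mul, one_mul,
            m2111l (y*y') u (m1212l y y' hy1 hy2 hy'1 hy'2) (m1212r y y' hy1 hy2 hy'1 hy'2) hu1 hu2,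
            sub_zero]] at h
    linear_combination (norm := abel1) h
  have AL4 : ∀ y p y' : R, e*y = y → y*e = 0 → e*p = 0 → p*e = 0 → e*y' = y' → y'*e = 0 →
      (y*p)*y' = p*(y*y') := by
    intro y p y' hy1 hy2 hp1 hp2 hy'1 hy'2
    have h := mMouf' alt1 alt2 tor2 (1-e) p y' y
    rw [show (1-e)*p = p by rw [sub_mul, one_mul, hp1, sub_zero],
        show y'*(1-e) = y' by rw [mul_sub, mul_one, hy'2, sub_zero],
        z2212 p y' hp1 hp2 hy'1 hy'2, zero_mul, mul_zero, zero_mul, mul_zero] at h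
    have hanti := anti12 y y' hy1 hy2 hy'1 hy'2
    have hpp := congrArg (fun t : R => p * t) hanti
    simp only [mul_add, mul_zero] at hpp
    linear_combination (norm := abel1) h - hpp
  -- the key claim : A1 * y = y * A4 for all y in R12
  have hT : ∀ y : R, e*y = y → y*e = 0 → A1*y = y*A4 := by
    intro y hy1 hy2
    have hTm1 : e*(A1*y - y*A4) = A1*y - y*A4 := by
      rw [mul_sub, m1112l A1 y hA1l hA1r hy1 hy2, m1222l y A4 hy1 hy2 hA4l hA4r]
    have hTm2 : (A1*y - y*A4)*e = 0 := by
      rw [sub_mul, m1112r A1 y hA1l hA1r hy1 hy2, m1222r y A4 hy1 hy2 hA4l hA4r, sub_zero]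
    have S1 : ∀ w : R, e*w = 0 → w*e = w → (A1*y - y*A4)*w = 0 := by
      intro w hw1 hw2
      have h1 : (A1*y)*w = (y*w)*A1 := by
        rw [AL1 A1 y w hA1l hA1r hy1 hy2 hw1 hw2,
            hC1 (y*w) (m1221l y w hy1 hy2 hw1 hw2) (m1221r y w hy1 hy2 hw1 hw2)]
      have h2 : (y*A4)*w = y*(w*A1) := by
        rw [AL2 y A4 w hy1 hy2 hA4l hA4r hw1 hw2, hK w hw1 hw2]
      have h3 : (y*w)*A1 = y*(w*A1) := AL5 y w A1 hA1l hA1r hy1 hy2 hw1 hw2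
      rw [sub_mul, h1, h2, h3, sub_self]
    have S2 : ∀ y' : R, e*y' = y' → y'*e = 0 → (A1*y - y*A4)*y' = 0 := by
      intro y' hy'1 hy'2
      have h1 : (A1*y)*y' = (y*y')*A1 := AL3 A1 y y' hA1l hA1r hy1 hy2 hy'1 hy'2
      have h2 : (y*A4)*y' = A4*(y*y') := AL4 y A4 y' hy1 hy2 hA4l hA4r hy'1 hy'2
      have h3 : A4*(y*y') = (y*y')*A1 :=
        hK (y*y') (m1212l y y' hy1 hy2 hy'1 hy'2) (m1212r y y' hy1 hy2 hy'1 hy'2)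
      rw [sub_mul, h1, h2, h3, sub_self]
    have S3 : ∀ u : R, e*u = u → u*e = u → (A1*y - y*A4)*u = 0 := by
      intro u hu1 hu2
      rw [sub_mul,
          z1211 (A1*y) u (m1112l A1 y hA1l hA1r hy1 hy2) (m1112r A1 y hA1l hA1r hy1 hy2) hu1 hu2,
          z1211 (y*A4) u (m1222l y A4 hy1 hy2 hA4l hA4r) (m1222r y A4 hy1 hy2 hA4l hA4r) hu1 hu2,
          sub_self]
    have key : ∀ r : R, ((A1*y - y*A4) * r) * e = 0 := by
      intro r
      obtain ⟨r1, r2, r3, r4, hr, h1l, h1r, h2l, h2r, h3l, h3r, h4l, h4r⟩ := split4 r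
      rw [hr]
      simp only [mul_add, add_mul]
      rw [S3 r1 h1l h1r, S2 r2 h2l h2r, S1 r3 h3l h3r, zero_mul,
          m1222r (A1*y - y*A4) r4 hTm1 hTm2 h4l h4r]
      abel
    have h0 := hd _ key
    linear_combination (norm := abel1) h0
  -- the central element
  have hzc : ∀ r : R, (A1+A4)*r = r*(A1+A4) := by
    intro r
    obtain ⟨r1, r2, r3, r4, hr, h1l, h1r, h2l, h2r, h3l, h3r, h4l, h4r⟩ := split4 r
    rw [hr]
    simp only [mul_add, add_mul]
    rw [z2211 A4 r1 hA4l hA4r h1l h1r, z1122 r1 A4 h1l h1r hA4l hA4r,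
        z2212 A4 r2 hA4l hA4r h2l h2r, z1211 r2 A1 h2l h2r hA1l hA1r,
        z1121 A1 r3 hA1l hA1r h3l h3r, z2122 r3 A4 h3l h3r hA4l hA4r,
        z1122 A1 r4 hA1l hA1r h4l h4r, z2211 r4 A1 h4l h4r hA1l hA1r,
        hC1 r1 h1l h1r, hT r2 h2l h2r, hK r3 h3l h3r, hC2 r4 h4l h4r]
    abel
  refine ⟨A1 + A4, hzc, ?_, ?_⟩
  · rw [← hA1def, add_mul, hA1r, hA4r, add_zero]
  · rw [hsplita]
    simp only [mul_sub, sub_mul, mul_add, add_mul, mul_one, one_mul,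
      hA1r, hA2r, hA4r, hA1l, hA2l, hA4l, mul_zero, zero_mul]
    abel

end AltProof

theorem stmt12 {R : Type*} [NonAssocRing R]
    (alt1 : ∀ x y : R, x * x * y = x * (x * y))
    (alt2 : ∀ x y : R, y * x * x = y * (x * x))
    (tor2 : ∀ x : R, (2 : ℕ) • x = 0 → x = 0)
    (tor3 : ∀ x : R, (3 : ℕ) • x = 0 → x = 0)
    (e₁ : R) (he : e₁ * e₁ = e₁) (he0 : e₁ ≠ 0) (he1 : e₁ ≠ 1)
    (hd1 : ∀ x : R, (∀ r : R, x * r * e₁ = 0) → x = 0)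
    (hd2 : ∀ x : R, (∀ r : R, x * r * (1 - e₁) = 0) → x = 0)
    (φ : R → R) (hadd : ∀ x y : R, φ (x + y) = φ x + φ y)
    (hcomm : ∀ x : R, φ x * x = x * φ x)
    :
    ∀ i j : Fin 2, i ≠ j → ∀ x ∈ peirceSet e₁ i j,
      ∃ z z' : R, (∀ r : R, z * r = r * z) ∧ (∀ r : R, z' * r = r * z') ∧
        peirceE e₁ i * (φ x * peirceE e₁ i) = z * peirceE e₁ i ∧
        peirceE e₁ j * (φ x * peirceE e₁ j) = z' * peirceE e₁ j
    := by
  have cee1 : ∀ t : R, (t*e₁)*e₁ = t*e₁ := fun t => by rw [alt2, he]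
  have flexe1 : ∀ t : R, (e₁*t)*e₁ = e₁*(t*e₁) := fun t => by
    have h := AltProof.flex alt1 alt2 e₁ t
    simp only [AltProof.asc] at h
    linear_combination (norm := abel1) h
  have he' : (1-e₁)*(1-e₁) = 1-e₁ := by
    simp only [mul_sub, sub_mul, mul_one, one_mul, he]; abel
  have cee2 : ∀ t : R, (t*(1-e₁))*(1-e₁) = t*(1-e₁) := fun t => by rw [alt2, he']
  have flexe2 : ∀ t : R, ((1-e₁)*t)*(1-e₁) = (1-e₁)*(t*(1-e₁)) := fun t => by
    have h := AltProof.flex alt1 alt2 (1-e₁) t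
    simp only [AltProof.asc] at h
    linear_combination (norm := abel1) h
  intro i j hij x hx
  obtain ⟨a, hxa⟩ := hx
  fin_cases i <;> fin_cases j
  · exact absurd rfl hij
  · -- i = 0, j = 1
    norm_num [peirceE, Fin.ext_iff] at hxa ⊢
    have hx1 : e₁ * x = x := by rw [hxa, ← alt1, he]
    have hx2 : x * e₁ = 0 := by
      have h1 : (a*(1-e₁))*e₁ = 0 := by
        rw [mul_sub, mul_one, sub_mul, cee1, sub_self]
      rw [hxa, flexe1, h1, mul_zero]
    obtain ⟨z, hzc, h1, h2⟩ :=
      AltProof.master alt1 alt2 tor2 e₁ he hd1 φ hadd hcomm x hx1 hx2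
    exact ⟨z, hzc, z, hzc, h1, h2⟩
  · -- i = 1, j = 0
    norm_num [peirceE, Fin.ext_iff] at hxa ⊢
    have hx1 : (1-e₁) * x = x := by rw [hxa, ← alt1, he']
    have hx2 : x * (1-e₁) = 0 := by
      have h1 : (a*e₁)*(1-e₁) = 0 := by
        rw [mul_sub, mul_one, cee1, sub_self]
      rw [hxa, flexe2, h1, mul_zero]
    obtain ⟨z, hzc, h1, h2⟩ :=
      AltProof.master alt1 alt2 tor2 (1-e₁) he' hd2 φ hadd hcomm x hx1 hx2
    rw [sub_sub_cancel] at h2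
    exact ⟨z, hzc, z, hzc, h1, h2⟩
  · exact absurd rfl hij
end

section
/- Let R be a unital 2- and 3-torsion free alternative ring with a nontrivial idempotent e_1, e_2 = 1 − e_1, satisfying: for each i ∈ {1,2}, if x ∈ R has (x r)e_i = 0 for all r ∈ R, then x = 0. Let φ : R → R be an additive commuting map. Then for all i ≠ j in {1,2}, every x_ij ∈ R_ij and every x_ji ∈ R_ji: [e_1 φ(x_ij) e_1 + e_2 φ(x_ij) e_2, x_ji] = 0. -/
set_option linter.unusedSectionVars false
set_option linter.unusedVariables false

namespace Stmt15Aux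

variable {R : Type*} [NonAssocRing R]

/-- The associator. -/
def As (a b c : R) : R := a * b * c - a * (b * c)

lemma muA (a b c : R) : a * b * c = a * (b * c) + As a b c := by rw [As]; abel

lemma As_add₁ (a a' b c : R) : As (a + a') b c = As a b c + As a' b c := by
  simp only [As, add_mul]; abel
lemma As_add₂ (a b b' c : R) : As a (b + b') c = As a b c + As a b' c := by
  simp only [As, add_mul, mul_add]; abel
lemma As_add₃ (a b c c' : R) : As a b (c + c') = As a b c + As a b c' := by
  simp only [As, mul_add]; abel
lemma As_sub₁ (a a' b c : R) : As (a - a') b c = As a b c - As a' b c := by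
  simp only [As, sub_mul]; abel
lemma As_sub₂ (a b b' c : R) : As a (b - b') c = As a b c - As a b' c := by
  simp only [As, sub_mul, mul_sub]; abel
lemma As_sub₃ (a b c c' : R) : As a b (c - c') = As a b c - As a b c' := by
  simp only [As, mul_sub]; abel
lemma As_one₁ (b c : R) : As 1 b c = 0 := by simp [As]
lemma As_one₂ (a c : R) : As a 1 c = 0 := by simp [As]
lemma As_one₃ (a b : R) : As a b 1 = 0 := by simp [As]

section Alt
variable (alt1 : ∀ x y : R, x * x * y = x * (x * y))
variable (alt2 : ∀ x y : R, y * x * x = y * (x * x))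
include alt1 alt2

lemma As_aab (a b : R) : As a a b = 0 := sub_eq_zero.mpr (alt1 a b)
lemma As_abb (a b : R) : As a b b = 0 := sub_eq_zero.mpr (alt2 b a)

lemma As_swap₁ (a b c : R) : As b a c = - As a b c := by
  have h := As_aab alt1 alt2 (a + b) c
  rw [As_add₁, As_add₂, As_add₂, As_aab alt1 alt2, As_aab alt1 alt2] at h
  have h' : As a b c + As b a c = 0 := by simpa using h
  exact eq_neg_of_add_eq_zero_right h'

lemma As_swap₃ (a b c : R) : As a c b = - As a b c := by
  have h := As_abb alt1 alt2 a (b + c)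
  rw [As_add₂, As_add₃, As_add₃, As_abb alt1 alt2, As_abb alt1 alt2] at h
  have h' : As a b c + As a c b = 0 := by simpa using h
  exact eq_neg_of_add_eq_zero_right h'

lemma As_flex (a b : R) : As a b a = 0 := by
  rw [As_swap₃ alt1 alt2 a a b, As_aab alt1 alt2, neg_zero]

section Idem
variable (e : R) (he : e * e = e)
include he

lemma lee (r : R) : e * (e * r) = e * r := by
  have := alt1 e r; rw [he] at this; exact this.symm

lemma ree (r : R) : r * e * e = r * e := by
  have := alt2 e r; rw [he] at this; exact this

lemma flexe (r : R) : (e * r) * e = e * (r * e) :=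
  sub_eq_zero.mp (As_flex alt1 alt2 e r)

/-- R₁₁ ⬝ R₂₁ = 0 (needs 2-torsion-freeness). -/
lemma mul_w_q (tor2 : ∀ x : R, (2 : ℕ) • x = 0 → x = 0)
    (w q : R) (hw1 : e * w = w) (hw2 : w * e = w)
    (hq1 : e * q = 0) (hq2 : q * e = q) : w * q = 0 := by
  have h1 : As w e q = w * q := by
    simp only [As]; rw [hw2, hq1, mul_zero, sub_zero]
  have h2 : As e w q = -(w * q) := by rw [As_swap₁ alt1 alt2 w e q, h1]
  simp only [As, hw1] at h2
  -- h2 : w * q - e * (w * q) = -(w * q)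
  have he2 : e * (w * q) = w * q + w * q := by
    linear_combination (norm := abel1) -h2
  have h4 := lee alt1 alt2 e he (w * q)
  rw [he2, mul_add, he2] at h4
  -- h4 : (w*q + w*q) + (w*q + w*q) = w*q + w*q
  apply tor2
  rw [two_nsmul]
  linear_combination (norm := abel1) h4

/-- R₂₂ ⬝ R₂₁ ⊆ R₂₁. -/
lemma mul_v_q (v q : R) (hv1 : e * v = 0) (hv2 : v * e = 0)
    (hq1 : e * q = 0) (hq2 : q * e = q) :
    (v * q) * e = v * q ∧ e * (v * q) = 0 := by
  have h0 : As v e q = 0 := by simp only [As]; rw [hv2, hq1, mul_zero, zero_mul, sub_zero]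
  constructor
  · have h1 : As v q e = 0 := by rw [As_swap₃ alt1 alt2 v e q, h0, neg_zero]
    simp only [As] at h1; rw [hq2] at h1
    linear_combination (norm := abel1) h1
  · have h1 : As e v q = 0 := by rw [As_swap₁ alt1 alt2 v e q, h0, neg_zero]
    simp only [As] at h1; rw [hv1, zero_mul] at h1
    linear_combination (norm := abel1) -h1

/-- R₂₁ ⬝ R₁₁ ⊆ R₂₁. -/
lemma mul_q_w (q w : R) (hq1 : e * q = 0) (hq2 : q * e = q)
    (hw1 : e * w = w) (hw2 : w * e = w) :
    (q * w) * e = q * w ∧ e * (q * w) = 0 := by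
  have h0 : As q e w = 0 := by simp only [As]; rw [hq2, hw1, sub_self]
  constructor
  · have h1 : As q w e = 0 := by rw [As_swap₃ alt1 alt2 q e w, h0, neg_zero]
    simp only [As] at h1; rw [hw2] at h1
    linear_combination (norm := abel1) h1
  · have h1 : As e q w = 0 := by rw [As_swap₁ alt1 alt2 q e w, h0, neg_zero]
    simp only [As] at h1; rw [hq1, zero_mul] at h1
    linear_combination (norm := abel1) -h1

/-- R₂₁ ⬝ R₂₂ = 0. -/
lemma mul_q_v (q v : R) (hq1 : e * q = 0) (hq2 : q * e = q)
    (hv1 : e * v = 0) (hv2 : v * e = 0) : q * v = 0 := by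
  have h1 : As q e v = q * v := by
    simp only [As]; rw [hq2, hv1, mul_zero, sub_zero]
  have h2 : As v q e = 0 := by
    rw [As_swap₃ alt1 alt2 v e q]
    simp only [As]; rw [hv2, hq1, mul_zero, zero_mul, sub_zero, neg_zero]
  have h3 : As q v e = 0 := by rw [As_swap₁ alt1 alt2 v q e, h2, neg_zero]
  have h4 : As q v e = -(q * v) := by rw [As_swap₃ alt1 alt2 q e v, h1]
  rw [h3] at h4
  linear_combination (norm := abel1) h4

/-- R₂₁ ⬝ R₂₁ ⊆ R₁₂. -/
lemma mul_q_q (q q' : R) (hq1 : e * q = 0) (hq2 : q * e = q)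
    (hq1' : e * q' = 0) (hq2' : q' * e = q') :
    (q * q') * e = 0 ∧ e * (q * q') = q * q' := by
  have h0 : As q e q' = q * q' := by
    simp only [As]; rw [hq2, hq1', mul_zero, sub_zero]
  constructor
  · have h1 : As q q' e = -(q * q') := by rw [As_swap₃ alt1 alt2 q e q', h0]
    simp only [As] at h1; rw [hq2'] at h1
    linear_combination (norm := abel1) h1
  · have h1 : As e q q' = -(q * q') := by rw [As_swap₁ alt1 alt2 q e q', h0]
    simp only [As] at h1; rw [hq1, zero_mul] at h1
    linear_combination (norm := abel1) -h1

/-- R₁₂ ⬝ R₂₁ ⊆ R₁₁. -/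
lemma mul_p_q (p q : R) (hp1 : e * p = p) (hp2 : p * e = 0)
    (hq1 : e * q = 0) (hq2 : q * e = q) :
    (p * q) * e = p * q ∧ e * (p * q) = p * q := by
  have h0 : As p e q = 0 := by
    simp only [As]; rw [hp2, hq1, mul_zero, zero_mul, sub_zero]
  constructor
  · have h1 : As p q e = 0 := by rw [As_swap₃ alt1 alt2 p e q, h0, neg_zero]
    simp only [As] at h1; rw [hq2] at h1
    linear_combination (norm := abel1) h1
  · have h1 : As e p q = 0 := by rw [As_swap₁ alt1 alt2 p e q, h0, neg_zero]
    simp only [As] at h1; rw [hp1] at h1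
    linear_combination (norm := abel1) -h1

/-- R₂₁ ⬝ R₁₂ ⊆ R₂₂. -/
lemma mul_q_p (q p : R) (hq1 : e * q = 0) (hq2 : q * e = q)
    (hp1 : e * p = p) (hp2 : p * e = 0) :
    (q * p) * e = 0 ∧ e * (q * p) = 0 := by
  have h0 : As q e p = 0 := by simp only [As]; rw [hq2, hp1, sub_self]
  constructor
  · have h1 : As q p e = 0 := by rw [As_swap₃ alt1 alt2 q e p, h0, neg_zero]
    simp only [As] at h1; rw [hp2, mul_zero] at h1
    linear_combination (norm := abel1) h1
  · have h1 : As e q p = 0 := by rw [As_swap₁ alt1 alt2 q e p, h0, neg_zero]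
    simp only [As] at h1; rw [hq1, zero_mul] at h1
    linear_combination (norm := abel1) -h1

/-- R₁₁ ⬝ R₁₂ ⊆ R₁₂ (the part we need). -/
lemma mul_w_p (w p : R) (hw1 : e * w = w) (hw2 : w * e = w)
    (hp1 : e * p = p) (hp2 : p * e = 0) : (w * p) * e = 0 := by
  have h0 : As w e p = 0 := by simp only [As]; rw [hw2, hp1, sub_self]
  have h1 : As w p e = 0 := by rw [As_swap₃ alt1 alt2 w e p, h0, neg_zero]
  simp only [As] at h1; rw [hp2, mul_zero] at h1
  linear_combination (norm := abel1) h1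

/-- R₂₂ ⬝ R₁₂ = 0 (needs 2-torsion-freeness). -/
lemma mul_v_p (tor2 : ∀ x : R, (2 : ℕ) • x = 0 → x = 0)
    (v p : R) (hv1 : e * v = 0) (hv2 : v * e = 0)
    (hp1 : e * p = p) (hp2 : p * e = 0) : v * p = 0 := by
  have h1 : As v e p = -(v * p) := by
    simp only [As]; rw [hv2, hp1, zero_mul]; abel
  have h2 : As e v p = v * p := by rw [As_swap₁ alt1 alt2 v e p, h1, neg_neg]
  simp only [As] at h2; rw [hv1, zero_mul] at h2
  -- h2 : 0 - e * (v * p) = v * p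
  have h3 : e * (v * p) = -(v * p) := by linear_combination (norm := abel1) -h2
  have h4 := lee alt1 alt2 e he (v * p)
  rw [h3, mul_neg, h3, neg_neg] at h4
  -- h4 : v * p = -(v * p)
  apply tor2
  rw [two_nsmul]
  linear_combination (norm := abel1) h4

/-- R₁₂ ⬝ R₁₁ = 0 (needs 2-torsion-freeness). -/
lemma mul_p_w (tor2 : ∀ x : R, (2 : ℕ) • x = 0 → x = 0)
    (p w : R) (hp1 : e * p = p) (hp2 : p * e = 0)
    (hw1 : e * w = w) (hw2 : w * e = w) : p * w = 0 := by
  have h1 : As p e w = -(p * w) := by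
    simp only [As]; rw [hp2, hw1, zero_mul]; abel
  have h2 : As p w e = p * w := by rw [As_swap₃ alt1 alt2 p e w, h1, neg_neg]
  simp only [As] at h2; rw [hw2] at h2
  -- h2 : p*w*e - p*w = p*w
  have h3 : (p * w) * e = p * w + p * w := by linear_combination (norm := abel1) h2
  have h4 := ree alt1 alt2 e he (p * w)
  rw [h3, add_mul, h3] at h4
  -- h4 : (p*w + p*w) + (p*w + p*w) = p*w + p*w
  apply tor2
  rw [two_nsmul]
  linear_combination (norm := abel1) h4

/-- R₁₂ ⬝ R₂₂ ⊆ R₁₂ (the part we need). -/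
lemma mul_p_v (p v : R) (hp1 : e * p = p) (hp2 : p * e = 0)
    (hv1 : e * v = 0) (hv2 : v * e = 0) : (p * v) * e = 0 := by
  have h0 : As p e v = 0 := by
    simp only [As]; rw [hp2, hv1, mul_zero, zero_mul, sub_zero]
  have h1 : As p v e = 0 := by rw [As_swap₃ alt1 alt2 p e v, h0, neg_zero]
  simp only [As] at h1; rw [hv2, mul_zero] at h1
  linear_combination (norm := abel1) h1


/-- char of `e*(u*(1-e))` as an R₁₂ element. -/
lemma char_p (u : R) :
    e * (e * (u * (1 - e))) = e * (u * (1 - e)) ∧ (e * (u * (1 - e))) * e = 0 := by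
  constructor
  · exact lee alt1 alt2 e he (u * (1 - e))
  · have hA : As u (1 - e) e = 0 := by
      rw [As_sub₂, As_one₂, As_abb alt1 alt2, sub_self]
    have h1 : (u * (1 - e)) * e = 0 := by
      simp only [As] at hA
      have hme : (1 - e) * e = 0 := by rw [sub_mul, one_mul, he, sub_self]
      rw [hme, mul_zero] at hA
      linear_combination (norm := abel1) hA
    rw [flexe alt1 alt2 e he (u * (1 - e)), h1, mul_zero]

/-- char of `(1-e)*(c*e)` as an R₂₁ element. -/
lemma char_q (c : R) :
    e * ((1 - e) * (c * e)) = 0 ∧ ((1 - e) * (c * e)) * e = (1 - e) * (c * e) := by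
  constructor
  · have hA : As e (1 - e) (c * e) = 0 := by
      rw [As_sub₂, As_one₂, As_aab alt1 alt2, sub_self]
    simp only [As] at hA
    have hem : e * (1 - e) = 0 := by rw [mul_sub, mul_one, he, sub_self]
    rw [hem, zero_mul] at hA
    linear_combination (norm := abel1) -hA
  · have hA : As (1 - e) (c * e) e = 0 := by
      rw [As_sub₁, As_one₁, As_flex alt1 alt2, sub_self]
    simp only [As] at hA
    rw [ree alt1 alt2 e he c] at hA
    linear_combination (norm := abel1) hA

lemma char_a11 (a : R) :
    e * (e * (a * e)) = e * (a * e) ∧ (e * (a * e)) * e = e * (a * e) := by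
  refine ⟨lee alt1 alt2 e he (a * e), ?_⟩
  rw [flexe alt1 alt2 e he (a * e), ree alt1 alt2 e he a]

lemma char_a12 (a : R) :
    e * (e * a - e * (a * e)) = e * a - e * (a * e) ∧
      (e * a - e * (a * e)) * e = 0 := by
  constructor
  · rw [mul_sub, lee alt1 alt2 e he a, lee alt1 alt2 e he (a * e)]
  · rw [sub_mul, flexe alt1 alt2 e he a, (char_a11 alt1 alt2 e he a).2, sub_self]

lemma char_a21 (a : R) :
    e * (a * e - e * (a * e)) = 0 ∧
      (a * e - e * (a * e)) * e = a * e - e * (a * e) := by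
  constructor
  · rw [mul_sub, lee alt1 alt2 e he (a * e), sub_self]
  · rw [sub_mul, ree alt1 alt2 e he a, (char_a11 alt1 alt2 e he a).2]

lemma char_a22 (a : R) :
    e * (a - e * a - a * e + e * (a * e)) = 0 ∧
      (a - e * a - a * e + e * (a * e)) * e = 0 := by
  constructor
  · rw [mul_add, mul_sub, mul_sub, lee alt1 alt2 e he a, lee alt1 alt2 e he (a * e)]
    abel
  · rw [add_mul, sub_mul, sub_mul, flexe alt1 alt2 e he a,
      ree alt1 alt2 e he a, (char_a11 alt1 alt2 e he a).2]
    abel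

end Idem
end Alt

lemma decomp (e a : R) :
    a = e * (a * e) + (e * a - e * (a * e)) + (a * e - e * (a * e))
      + (a - e * a - a * e + e * (a * e)) := by abel

/-- projection onto R₁₂: `π₁₂ r = e r - e (r e)`. -/
def pi12 (e r : R) : R := e * r - e * (r * e)
/-- projection onto R₂₁: `π₂₁ r = r e - e (r e)`. -/
def pi21 (e r : R) : R := r * e - e * (r * e)

lemma pi12_add (e r s : R) : pi12 e (r + s) = pi12 e r + pi12 e s := by
  simp only [pi12, mul_add, add_mul]; abel
lemma pi21_add (e r s : R) : pi21 e (r + s) = pi21 e r + pi21 e s := by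
  simp only [pi21, mul_add, add_mul]; abel
lemma pi12_of_re_self (e r : R) (h : r * e = r) : pi12 e r = 0 := by
  rw [pi12, h, sub_self]
lemma pi21_zero₁ (e r : R) (h1 : r * e = r) (h2 : e * r = r) : pi21 e r = 0 := by
  rw [pi21, h1, h2, sub_self]
lemma pi21_zero₂ (e r : R) (h : r * e = 0) : pi21 e r = 0 := by
  rw [pi21, h, mul_zero, sub_zero]
lemma pi21_zero₀ (e : R) : pi21 e 0 = 0 := by simp [pi21]
lemma pi21_id (e r : R) (h1 : r * e = r) (h2 : e * r = 0) : pi21 e r = r := by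
  rw [pi21, h1, h2, sub_zero]

lemma hlin {φ : R → R} (hadd : ∀ x y : R, φ (x + y) = φ x + φ y)
    (hcomm : ∀ x : R, φ x * x = x * φ x) (p q : R) :
    φ p * q + φ q * p = p * φ q + q * φ p := by
  have h := hcomm (p + q)
  rw [hadd] at h
  simp only [add_mul, mul_add] at h
  rw [hcomm p, hcomm q] at h
  linear_combination (norm := abel1) h

section Core
variable (alt1 : ∀ x y : R, x * x * y = x * (x * y))
variable (alt2 : ∀ x y : R, y * x * x = y * (x * x))
include alt1 alt2

theorem core (tor2 : ∀ x : R, (2 : ℕ) • x = 0 → x = 0)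
    (e : R) (he : e * e = e) (x y a b d : R)
    (hx1 : e * x = x) (hx2 : x * e = 0)
    (hy1 : e * y = 0) (hy2 : y * e = y)
    (hab : a * y + b * x = x * b + y * a)
    (hde : d * y + b * e = e * b + y * d)
    (hce : d * e = e * d) :
    (e * (a * e) + (1 - e) * (a * (1 - e))) * y
      = y * (e * (a * e) + (1 - e) * (a * (1 - e))) := by
  -- step 1: d is diagonal
  have hd21 : d * e = e * (d * e) := by
    have h1 : (e * d) * e = e * (d * e) := flexe alt1 alt2 e he d
    rw [← hce, ree alt1 alt2 e he d] at h1
    exact h1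
  have hd12 : e * d = e * (d * e) := by
    calc e * d = d * e := hce.symm
    _ = e * (d * e) := hd21
  have hd : d = e * (d * e) + (d - e * d - d * e + e * (d * e)) := by
    rw [← hd12, hce]; abel
  -- chars of diagonal components of d
  have hdw := char_a11 alt1 alt2 e he d
  have hdv := char_a22 alt1 alt2 e he d
  -- step 2: key lemma : e-b-(1-e) component of b vanishes
  have hdy : d * y = (e * (d * e)) * y + (d - e * d - d * e + e * (d * e)) * y := by
    rw [← add_mul, ← hd]
  have hyd : y * d = y * (e * (d * e)) + y * (d - e * d - d * e + e * (d * e)) := by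
    rw [← mul_add, ← hd]
  have hw0 : (e * (d * e)) * y = 0 :=
    mul_w_q alt1 alt2 e he tor2 _ y hdw.1 hdw.2 hy1 hy2
  have hvq := mul_v_q alt1 alt2 e he _ y hdv.1 hdv.2 hy1 hy2
  have hqw := mul_q_w alt1 alt2 e he y _ hy1 hy2 hdw.1 hdw.2
  have hqv : y * (d - e * d - d * e + e * (d * e)) = 0 :=
    mul_q_v alt1 alt2 e he y _ hy1 hy2 hdv.1 hdv.2
  have K : pi12 e (d * y) + pi12 e (b * e) = pi12 e (e * b) + pi12 e (y * d) := by
    rw [← pi12_add, ← pi12_add, hde]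
  have K1 : pi12 e (d * y) = 0 := by
    rw [hdy, hw0, zero_add]
    exact pi12_of_re_self e _ hvq.1
  have K2 : pi12 e (b * e) = 0 := pi12_of_re_self e _ (ree alt1 alt2 e he b)
  have K3 : pi12 e (y * d) = 0 := by
    rw [hyd, hqv, add_zero]
    exact pi12_of_re_self e _ hqw.1
  have K4 : pi12 e (e * b) = e * b - e * (b * e) := by
    rw [pi12, flexe alt1 alt2 e he b, lee alt1 alt2 e he b, lee alt1 alt2 e he (b * e)]
  rw [K1, K2, K3, K4] at K
  have hb12 : e * b - e * (b * e) = 0 := by linear_combination (norm := abel1) -K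
  -- step 3: main projection
  have hadec := decomp e a
  have haw := char_a11 alt1 alt2 e he a
  have hap := char_a12 alt1 alt2 e he a
  have haq := char_a21 alt1 alt2 e he a
  have hav := char_a22 alt1 alt2 e he a
  have hbdec : b = e * (b * e) + (b * e - e * (b * e))
      + (b - e * b - b * e + e * (b * e)) := by
    have h := decomp e b
    rw [hb12] at h
    linear_combination (norm := abel1) h
  have hbw := char_a11 alt1 alt2 e he b
  have hbq := char_a21 alt1 alt2 e he b
  have hbv := char_a22 alt1 alt2 e he b
  have M : pi21 e (a * y) + pi21 e (b * x) = pi21 e (x * b) + pi21 e (y * a) := by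
    rw [← pi21_add, ← pi21_add, hab]
  -- pi21 (a*y) = a22 * y
  have hay : a * y = (e * (a * e)) * y + (e * a - e * (a * e)) * y
      + (a * e - e * (a * e)) * y + (a - e * a - a * e + e * (a * e)) * y := by
    rw [← add_mul, ← add_mul, ← add_mul, ← hadec]
  have M1 : pi21 e (a * y) = (a - e * a - a * e + e * (a * e)) * y := by
    rw [hay, pi21_add, pi21_add, pi21_add]
    rw [mul_w_q alt1 alt2 e he tor2 _ y haw.1 haw.2 hy1 hy2, pi21_zero₀]
    have h12 := mul_p_q alt1 alt2 e he _ y hap.1 hap.2 hy1 hy2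
    rw [pi21_zero₁ e _ h12.1 h12.2]
    have h21 := mul_q_q alt1 alt2 e he _ y haq.1 haq.2 hy1 hy2
    rw [pi21_zero₂ e _ h21.1]
    have h22 := mul_v_q alt1 alt2 e he _ y hav.1 hav.2 hy1 hy2
    rw [pi21_id e _ h22.1 h22.2]
    abel
  -- pi21 (y*a) = y * a11
  have hya : y * a = y * (e * (a * e)) + y * (e * a - e * (a * e))
      + y * (a * e - e * (a * e)) + y * (a - e * a - a * e + e * (a * e)) := by
    rw [← mul_add, ← mul_add, ← mul_add, ← hadec]
  have M2 : pi21 e (y * a) = y * (e * (a * e)) := by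
    rw [hya, pi21_add, pi21_add, pi21_add]
    have h11 := mul_q_w alt1 alt2 e he y _ hy1 hy2 haw.1 haw.2
    rw [pi21_id e _ h11.1 h11.2]
    have h12 := mul_q_p alt1 alt2 e he y _ hy1 hy2 hap.1 hap.2
    rw [pi21_zero₂ e _ h12.1]
    have h21 := mul_q_q alt1 alt2 e he y _ hy1 hy2 haq.1 haq.2
    rw [pi21_zero₂ e _ h21.1]
    rw [mul_q_v alt1 alt2 e he y _ hy1 hy2 hav.1 hav.2, pi21_zero₀]
    abel
  -- pi21 (b*x) = 0
  have hbx : b * x = (e * (b * e)) * x + (b * e - e * (b * e)) * x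
      + (b - e * b - b * e + e * (b * e)) * x := by
    rw [← add_mul, ← add_mul, ← hbdec]
  have M3 : pi21 e (b * x) = 0 := by
    rw [hbx, pi21_add, pi21_add]
    rw [pi21_zero₂ e _ (mul_w_p alt1 alt2 e he _ x hbw.1 hbw.2 hx1 hx2)]
    have h21 := mul_q_p alt1 alt2 e he _ x hbq.1 hbq.2 hx1 hx2
    rw [pi21_zero₂ e _ h21.1]
    rw [mul_v_p alt1 alt2 e he tor2 _ x hbv.1 hbv.2 hx1 hx2, pi21_zero₀]
    abel
  -- pi21 (x*b) = 0
  have hxb : x * b = x * (e * (b * e)) + x * (b * e - e * (b * e))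
      + x * (b - e * b - b * e + e * (b * e)) := by
    rw [← mul_add, ← mul_add, ← hbdec]
  have M4 : pi21 e (x * b) = 0 := by
    rw [hxb, pi21_add, pi21_add]
    rw [mul_p_w alt1 alt2 e he tor2 x _ hx1 hx2 hbw.1 hbw.2, pi21_zero₀]
    have h21 := mul_p_q alt1 alt2 e he x _ hx1 hx2 hbq.1 hbq.2
    rw [pi21_zero₁ e _ h21.1 h21.2]
    rw [pi21_zero₂ e _ (mul_p_v alt1 alt2 e he x _ hx1 hx2 hbv.1 hbv.2)]
    abel
  rw [M1, M2, M3, M4] at M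
  -- M : a22 * y + 0 = 0 + y * a11
  have keyeq : (a - e * a - a * e + e * (a * e)) * y = y * (e * (a * e)) := by
    linear_combination (norm := abel1) M
  -- final assembly
  have hexp : (1 - e) * (a * (1 - e)) = a - e * a - a * e + e * (a * e) := by
    simp only [mul_sub, sub_mul, mul_one, one_mul]
    abel
  rw [hexp, add_mul, mul_add]
  rw [mul_w_q alt1 alt2 e he tor2 _ y haw.1 haw.2 hy1 hy2]
  rw [mul_q_v alt1 alt2 e he y _ hy1 hy2 hav.1 hav.2]
  rw [keyeq]
  abel

end Core

lemma comm_sum_swap (p q y : R) (h : (p + q) * y = y * (p + q)) :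
    (q + p) * y = y * (q + p) := by
  rw [add_comm q p]; exact h

end Stmt15Aux

open Stmt15Aux in
theorem stmt15 {R : Type*} [NonAssocRing R]
    (alt1 : ∀ x y : R, x * x * y = x * (x * y))
    (alt2 : ∀ x y : R, y * x * x = y * (x * x))
    (tor2 : ∀ x : R, (2 : ℕ) • x = 0 → x = 0)
    (tor3 : ∀ x : R, (3 : ℕ) • x = 0 → x = 0)
    (e₁ : R) (he : e₁ * e₁ = e₁) (he0 : e₁ ≠ 0) (he1 : e₁ ≠ 1)
    (hd1 : ∀ x : R, (∀ r : R, x * r * e₁ = 0) → x = 0)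
    (hd2 : ∀ x : R, (∀ r : R, x * r * (1 - e₁) = 0) → x = 0)
    (φ : R → R) (hadd : ∀ x y : R, φ (x + y) = φ x + φ y)
    (hcomm : ∀ x : R, φ x * x = x * φ x)
    :
    ∀ i j : Fin 2, i ≠ j → ∀ x ∈ peirceSet e₁ i j, ∀ y ∈ peirceSet e₁ j i,
      (e₁ * (φ x * e₁) + (1 - e₁) * (φ x * (1 - e₁))) * y =
        y * (e₁ * (φ x * e₁) + (1 - e₁) * (φ x * (1 - e₁)))
    := by
  intro i j hij x hx y hy
  have hcases : (i = 0 ∧ j = 1) ∨ (i = 1 ∧ j = 0) :=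
    (by decide : ∀ i j : Fin 2, i ≠ j → (i = 0 ∧ j = 1) ∨ (i = 1 ∧ j = 0)) i j hij
  rcases hcases with ⟨rfl, rfl⟩ | ⟨rfl, rfl⟩
  · obtain ⟨u, hu⟩ := hx
    obtain ⟨c, hc⟩ := hy
    rw [show peirceE e₁ (0 : Fin 2) = e₁ from rfl,
      show peirceE e₁ (1 : Fin 2) = 1 - e₁ from rfl] at hu hc
    subst hu; subst hc
    have hxc := char_p alt1 alt2 e₁ he u
    have hyc := char_q alt1 alt2 e₁ he c
    exact core alt1 alt2 tor2 e₁ he _ _ (φ _) (φ _) (φ e₁) hxc.1 hxc.2 hyc.1 hyc.2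
      (hlin hadd hcomm _ _) (hlin hadd hcomm e₁ _) (hcomm e₁)
  · obtain ⟨u, hu⟩ := hx
    obtain ⟨c, hc⟩ := hy
    rw [show peirceE e₁ (0 : Fin 2) = e₁ from rfl,
      show peirceE e₁ (1 : Fin 2) = 1 - e₁ from rfl] at hu hc
    subst hu; subst hc
    have hf : (1 - e₁) * (1 - e₁) = 1 - e₁ := by
      rw [mul_sub, mul_one, sub_mul, one_mul, he]; abel
    have hxc := char_p alt1 alt2 (1 - e₁) hf u
    rw [sub_sub_cancel] at hxc
    have hyc := char_q alt1 alt2 (1 - e₁) hf c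
    rw [sub_sub_cancel] at hyc
    have H := core alt1 alt2 tor2 (1 - e₁) hf _ _ (φ _) (φ _) (φ (1 - e₁))
      hxc.1 hxc.2 hyc.1 hyc.2
      (hlin hadd hcomm _ _) (hlin hadd hcomm (1 - e₁) _) (hcomm (1 - e₁))
    rw [sub_sub_cancel] at H
    exact comm_sum_swap _ _ _ H
end
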